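/- arXiv:1807.04474 — 7 statements merged into one kernel-verified Lean document; each statement's English description precedes it below -/
import Mathlib

section
/- Consider a standard Nash equilibrium problem (NEP), i.e. a GNEP in which each constraint function c^ν depends only on the block x^ν, with continuously differentiable θ_ν and c^ν, and let c(x) = (c^1(x^1),…,c^N(x^N)) be the concatenated constraint map ℝ^n → ℝ^r. If x̄ ∈ ℝ^n is feasible (c^ν(x̄^ν) ≤ 0 for all ν), then GNEP-CPLD holds at x̄ if and only if the concatenated map c satisfies the classical CPLD condition at x̄. -/
open Filter Topology Finset Function RealInnerProductSpace

/-- The strategy space of a GNEP: one Euclidean block per player. -/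
abbrev Strat {N : ℕ} (n : Fin N → ℕ) := (ν : Fin N) → EuclideanSpace ℝ (Fin (n ν))

/-- Partial gradient of `f : Strat n → ℝ` with respect to player `ν`'s block at `x`. -/
noncomputable def pgrad {N : ℕ} {n : Fin N → ℕ} (ν : Fin N)
    (f : Strat n → ℝ) (x : Strat n) : EuclideanSpace ℝ (Fin (n ν)) :=
  gradient (fun z => f (Function.update x ν z)) (x ν)

/-- Positive linear dependence of a family on a finite index set. -/
def PosLinDep {ι E : Type*} [AddCommGroup E] [Module ℝ E]
    (s : Finset ι) (v : ι → E) : Prop :=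
  ∃ a : ι → ℝ, (∀ i, 0 ≤ a i) ∧ (∃ i ∈ s, a i ≠ 0) ∧ ∑ i ∈ s, a i • v i = 0

/-- Linear dependence of a family on a finite index set. -/
def LinDep {ι E : Type*} [AddCommGroup E] [Module ℝ E]
    (s : Finset ι) (v : ι → E) : Prop :=
  ∃ a : ι → ℝ, (∃ i ∈ s, a i ≠ 0) ∧ ∑ i ∈ s, a i • v i = 0

/-- CPLD with respect to player `ν`. -/
def CPLDnu {N : ℕ} {n : Fin N → ℕ} {ι : Type*} (ν : Fin N)
    (c : ι → Strat n → ℝ) (x : Strat n) : Prop :=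
  ∀ I : Finset ι, (∀ i ∈ I, c i x = 0) →
    PosLinDep I (fun i => pgrad ν (c i) x) →
    ∃ U ∈ 𝓝 x, ∀ y ∈ U, LinDep I (fun i => pgrad ν (c i) y)

/-- EMFCQ with respect to player `ν`. -/
def EMFCQnu {N : ℕ} {n : Fin N → ℕ} {ι : Type*} (ν : Fin N)
    (c : ι → Strat n → ℝ) (x : Strat n) : Prop :=
  ∃ d : EuclideanSpace ℝ (Fin (n ν)), ∀ i, 0 ≤ c i x → inner (𝕜 := ℝ) (pgrad ν (c i) x) d < 0



section Aux

variable {N : ℕ} {n r : Fin N → ℕ}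

/-- If `f` depends only on block `ν`, its partial gradient w.r.t. any other block vanishes. -/
lemma pgrad_of_ne {ν μ : Fin N} (hμν : μ ≠ ν)
    (f : Strat n → ℝ) (hf : ∀ x y : Strat n, x ν = y ν → f x = f y)
    (x : Strat n) : pgrad μ f x = 0 := by
  unfold pgrad
  have h : (fun z => f (Function.update x μ z)) = fun _ => f x := by
    funext z
    exact hf _ _ (Function.update_of_ne (Ne.symm hμν) z x)
  rw [h, gradient_fun_const]

lemma filter_fst_eq (ν : Fin N) (I : Finset ((ν : Fin N) × Fin (r ν))) :
    I.filter (fun j => j.1 = ν) =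
      (Finset.univ.filter fun i : Fin (r ν) => (⟨ν, i⟩ : (ν : Fin N) × Fin (r ν)) ∈ I).map
        (Function.Embedding.sigmaMk ν) := by
  ext ⟨μ, i⟩
  simp only [Finset.mem_filter, Finset.mem_map, Finset.mem_univ, true_and,
    Function.Embedding.sigmaMk_apply]
  constructor
  · rintro ⟨hI, rfl⟩; exact ⟨i, hI, rfl⟩
  · rintro ⟨i', hi', h⟩; cases h; exact ⟨hi', rfl⟩

lemma sum_block
    (c : (ν : Fin N) → Fin (r ν) → Strat n → ℝ)
    (hNEP : ∀ ν i (x y : Strat n), x ν = y ν → c ν i x = c ν i y)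
    (ν : Fin N) (I : Finset ((ν : Fin N) × Fin (r ν)))
    (a : ((ν : Fin N) × Fin (r ν)) → ℝ) (y : Strat n) :
    ∑ j ∈ I, a j • pgrad ν (c j.1 j.2) y =
      ∑ i ∈ Finset.univ.filter
          (fun i : Fin (r ν) => (⟨ν, i⟩ : (ν : Fin N) × Fin (r ν)) ∈ I),
        a ⟨ν, i⟩ • pgrad ν (c ν i) y := by
  rw [← Finset.sum_filter_of_ne (p := fun j => j.1 = ν)
      (f := fun j => a j • pgrad ν (c j.1 j.2) y)]
  · rw [filter_fst_eq, Finset.sum_map]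
    rfl
  · intro j hj hne
    by_contra h
    apply hne
    rw [pgrad_of_ne (fun hh => h hh.symm) (c j.1 j.2) (hNEP j.1 j.2) y, smul_zero]

end Aux

/-- For a standard NEP (each `c ν` depends only on the block `x ν`),
at a feasible point, GNEP-CPLD holds iff the concatenated constraint map satisfies
the classical CPLD condition. -/
theorem stmt0 {N : ℕ} {n r : Fin N → ℕ}
    (θ : Fin N → Strat n → ℝ)
    (c : (ν : Fin N) → Fin (r ν) → Strat n → ℝ)
    (hθ : ∀ ν, ContDiff ℝ 1 (θ ν))
    (hc : ∀ ν i, ContDiff ℝ 1 (c ν i))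
    (hNEP : ∀ ν i (x y : Strat n), x ν = y ν → c ν i x = c ν i y)
    (xbar : Strat n)
    (hfeas : ∀ ν i, c ν i xbar ≤ 0) :
    (∀ ν, CPLDnu ν (c ν) xbar) ↔
      (∀ I : Finset ((ν : Fin N) × Fin (r ν)),
        (∀ j ∈ I, c j.1 j.2 xbar = 0) →
        PosLinDep I (fun j => (fun μ => pgrad μ (c j.1 j.2) xbar : Strat n)) →
        ∃ U ∈ 𝓝 xbar, ∀ y ∈ U,
          LinDep I (fun j => (fun μ => pgrad μ (c j.1 j.2) y : Strat n))) := by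

  constructor
  · -- GNEP-CPLD ⇒ classical CPLD
    intro hcpld I hact hpos
    obtain ⟨a, ha0, ⟨⟨ν, i0⟩, hj0I, hj0⟩, hsum⟩ := hpos
    set Iν : Finset (Fin (r ν)) :=
      Finset.univ.filter (fun i : Fin (r ν) => (⟨ν, i⟩ : (ν : Fin N) × Fin (r ν)) ∈ I) with hIν
    have hactν : ∀ i ∈ Iν, c ν i xbar = 0 := by
      intro i hi
      exact hact ⟨ν, i⟩ (by simpa [hIν] using hi)
    have hsumν : ∑ i ∈ Iν, a ⟨ν, i⟩ • pgrad ν (c ν i) xbar = 0 := by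
      have := congrFun hsum ν
      simp only [Finset.sum_apply, Pi.smul_apply, Pi.zero_apply] at this
      rw [← sum_block c hNEP ν I a xbar]
      exact this
    have hposν : PosLinDep Iν (fun i => pgrad ν (c ν i) xbar) :=
      ⟨fun i => a ⟨ν, i⟩, fun i => ha0 _, ⟨i0, by simpa [hIν] using hj0I, hj0⟩, hsumν⟩
    obtain ⟨U, hU, hlin⟩ := hcpld ν Iν hactν hposν
    refine ⟨U, hU, fun y hy => ?_⟩
    obtain ⟨b, ⟨i1, hi1, hb1⟩, hbsum⟩ := hlin y hy
    refine ⟨fun j => if h : j.1 = ν then b (h ▸ j.2) else 0,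
      ⟨⟨ν, i1⟩, by simpa [hIν] using hi1, by simpa using hb1⟩, ?_⟩
    funext μ
    simp only [Finset.sum_apply, Pi.smul_apply, Pi.zero_apply]
    by_cases hμ : μ = ν
    · subst hμ
      rw [sum_block c hNEP μ I _ y, ← hIν]
      simpa using hbsum
    · refine Finset.sum_eq_zero fun j hj => ?_
      by_cases hjν : j.1 = ν
      · rw [pgrad_of_ne (ν := j.1) (fun hh => hμ (hh.trans hjν)) (c j.1 j.2)
          (hNEP j.1 j.2) y, smul_zero]
      · simp [hjν]
  · -- classical CPLD ⇒ GNEP-CPLD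
    intro hcl ν I hact hpos
    obtain ⟨a, ha0, ⟨i0, hi0, ha0'⟩, hsum⟩ := hpos
    set Ihat : Finset ((ν : Fin N) × Fin (r ν)) := I.map (Function.Embedding.sigmaMk ν)
      with hIhat
    have hacthat : ∀ j ∈ Ihat, c j.1 j.2 xbar = 0 := by
      intro j hj
      simp only [hIhat, Finset.mem_map, Function.Embedding.sigmaMk_apply] at hj
      obtain ⟨i, hi, rfl⟩ := hj
      exact hact i hi
    have hposhat : PosLinDep Ihat
        (fun j => (fun μ => pgrad μ (c j.1 j.2) xbar : Strat n)) := by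
      refine ⟨fun j => if h : j.1 = ν then a (h ▸ j.2) else 0, fun j => ?_,
        ⟨⟨ν, i0⟩, by simp [hIhat, hi0], by simpa using ha0'⟩, ?_⟩
      · by_cases h : j.1 = ν <;> simp [h, ha0]
      · funext μ
        simp only [Finset.sum_apply, Pi.smul_apply, Pi.zero_apply, hIhat, Finset.sum_map,
          Function.Embedding.sigmaMk_apply]
        by_cases hμ : μ = ν
        · subst hμ
          refine (Finset.sum_congr rfl fun i _ => ?_).trans hsum
          show _ • pgrad μ (c μ i) xbar = a i • pgrad μ (c μ i) xbar
          rw [dif_pos trivial]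
          rfl
        · refine Finset.sum_eq_zero fun i hi => ?_
          show _ • pgrad μ (c ν i) xbar = 0
          rw [pgrad_of_ne (ν := ν) hμ (c ν i) (hNEP ν i) xbar, smul_zero]
    obtain ⟨U, hU, hlin⟩ := hcl Ihat hacthat hposhat
    refine ⟨U, hU, fun y hy => ?_⟩
    obtain ⟨B, ⟨j1, hj1, hB1⟩, hBsum⟩ := hlin y hy
    simp only [hIhat, Finset.mem_map, Function.Embedding.sigmaMk_apply] at hj1
    obtain ⟨i1, hi1, rfl⟩ := hj1
    refine ⟨fun i => B ⟨ν, i⟩, ⟨i1, hi1, hB1⟩, ?_⟩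
    have := congrFun hBsum ν
    simp only [Finset.sum_apply, Pi.smul_apply, Pi.zero_apply, hIhat, Finset.sum_map,
      Function.Embedding.sigmaMk_apply] at this
    exact this
end

section
/- Consider a GNEP with continuously differentiable θ_ν and c^ν. Let (x^k) ⊂ ℝ^n be a sequence converging to x̄ and, for each player ν, let (λ^{ν,k}) ⊂ ℝ^{r_ν} be vectors such that ∇_{x^ν}θ_ν(x^k) + ∇_{x^ν}c^ν(x^k) λ^{ν,k} → 0 and min{−c^ν(x^k), λ^{ν,k}} → 0 as k → ∞. If GNEP-CPLD holds at x̄, then there exists a multiplier λ̄ = (λ̄^1,…,λ̄^N) such that (x̄, λ̄) is a KKT point of the GNEP. -/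
open Filter Topology Finset Function RealInnerProductSpace

/-- KKT point of the GNEP with objectives `θ` and constraints `c`. -/
def KKTPoint {N : ℕ} {n : Fin N → ℕ} {r : Fin N → ℕ}
    (θ : Fin N → Strat n → ℝ) (c : (ν : Fin N) → Fin (r ν) → Strat n → ℝ)
    (x : Strat n) (lam : (ν : Fin N) → Fin (r ν) → ℝ) : Prop :=
  ∀ ν, (pgrad ν (θ ν) x + ∑ i, lam ν i • pgrad ν (c ν i) x = 0) ∧
    (∀ i, min (-(c ν i x)) (lam ν i) = 0)

section
variable {N : ℕ} {n : Fin N → ℕ} (ν : Fin N)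

noncomputable def updL : (Strat n × EuclideanSpace ℝ (Fin (n ν))) →L[ℝ] Strat n :=
  (ContinuousLinearMap.fst ℝ _ _) +
    ((LinearMap.single ℝ (fun μ => EuclideanSpace ℝ (Fin (n μ))) ν).toContinuousLinearMap).comp
      ((ContinuousLinearMap.snd ℝ _ _) -
        (ContinuousLinearMap.proj (R := ℝ) (φ := fun μ => EuclideanSpace ℝ (Fin (n μ))) ν).comp
          (ContinuousLinearMap.fst ℝ _ _))

lemma updL_apply (x : Strat n) (z : EuclideanSpace ℝ (Fin (n ν))) :
    updL ν (x, z) = Function.update x ν z := by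
  funext μ
  by_cases h : μ = ν
  · subst h; simp [updL]
  · simp [updL, Function.update, h, Pi.single_eq_of_ne h]

lemma pgrad_continuous (f : Strat n → ℝ) (hf : ContDiff ℝ 1 f) :
    Continuous (pgrad ν f) := by
  set g : Strat n × EuclideanSpace ℝ (Fin (n ν)) → ℝ := fun p => f (updL ν p) with hg
  have hgC : ContDiff ℝ 1 g := hf.comp (updL ν).contDiff
  have key : ∀ x : Strat n, pgrad ν f x =
      (InnerProductSpace.toDual ℝ _).symm
        ((fderiv ℝ g (x, x ν)).comp (ContinuousLinearMap.inr ℝ _ _)) := by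
    intro x
    have h1 : (fun z => f (Function.update x ν z)) = fun z => g (x, z) := by
      funext z; rw [hg]; simp [updL_apply]
    have h2 : HasFDerivAt (fun z => g (x, z))
        ((fderiv ℝ g (x, x ν)).comp (ContinuousLinearMap.inr ℝ _ _)) (x ν) :=
      ((hgC.differentiable one_ne_zero) (x, x ν)).hasFDerivAt.comp (x ν)
        (hasFDerivAt_prodMk_right x (x ν))
    rw [pgrad, gradient, h1, h2.fderiv]
  rw [continuous_congr fun x => (key x)]
  apply (InnerProductSpace.toDual ℝ _).symm.continuous.comp
  have hfd : Continuous (fun x : Strat n => fderiv ℝ g (x, x ν)) :=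
    (hgC.continuous_fderiv one_ne_zero).comp (continuous_id.prodMk (continuous_apply ν))
  exact (((ContinuousLinearMap.compSL (EuclideanSpace ℝ (Fin (n ν))) (Strat n × EuclideanSpace ℝ (Fin (n ν))) ℝ (RingHom.id ℝ) (RingHom.id ℝ)).flip (ContinuousLinearMap.inr ℝ _ _)).continuous).comp hfd
end

lemma cara {ι E : Type*} [AddCommGroup E] [Module ℝ E]
    (v : ι → E) (s : Finset ι) (a : ι → ℝ) (ha : ∀ i ∈ s, 0 ≤ a i) :
    ∃ t ⊆ s, ∃ b : ι → ℝ, (∀ i ∈ t, 0 < b i) ∧ ¬ LinDep t v ∧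
      ∑ i ∈ t, b i • v i = ∑ i ∈ s, a i • v i := by
  classical
  induction s using Finset.strongInduction generalizing a with
  | _ s IH =>
  set t₀ := s.filter (fun i => 0 < a i) with ht₀
  have ht₀s : t₀ ⊆ s := filter_subset _ _
  have hsum : ∑ i ∈ t₀, a i • v i = ∑ i ∈ s, a i • v i := by
    apply Finset.sum_filter_of_ne
    intro i hi hne
    rcases (ha i hi).lt_or_eq with h | h
    · exact h
    · exact absurd (by rw [← h, zero_smul]) hne
  by_cases hdep : LinDep t₀ v
  · obtain ⟨c, ⟨i₁, hi₁, hne⟩, hz⟩ := hdep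
    have hc' : ∃ c : ι → ℝ, (∃ i ∈ t₀, 0 < c i) ∧ ∑ i ∈ t₀, c i • v i = 0 := by
      rcases hne.lt_or_gt with hneg | hpos
      · refine ⟨-c, ⟨i₁, hi₁, by simpa using hneg⟩, ?_⟩
        simp only [Pi.neg_apply, neg_smul, Finset.sum_neg_distrib, hz, neg_zero]
      · exact ⟨c, ⟨i₁, hi₁, hpos⟩, hz⟩
    obtain ⟨c, ⟨i₂, hi₂, hi₂pos⟩, hz⟩ := hc'
    set P := t₀.filter (fun i => 0 < c i) with hP
    have hPne : P.Nonempty := ⟨i₂, mem_filter.2 ⟨hi₂, hi₂pos⟩⟩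
    obtain ⟨i₀, hi₀P, hmin⟩ := P.exists_min_image (fun i => a i / c i) hPne
    have hi₀t₀ : i₀ ∈ t₀ := (mem_filter.1 hi₀P).1
    have hci₀ : 0 < c i₀ := (mem_filter.1 hi₀P).2
    have hai₀ : 0 < a i₀ := (mem_filter.1 hi₀t₀).2
    set T := a i₀ / c i₀ with hT
    have hT0 : 0 ≤ T := div_nonneg hai₀.le hci₀.le
    set a' : ι → ℝ := fun i => a i - T * c i with ha'
    have ha'nn : ∀ i ∈ t₀, 0 ≤ a' i := by
      intro i hi
      by_cases hci : 0 < c i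
      · have h1 : T ≤ a i / c i := hmin i (mem_filter.2 ⟨hi, hci⟩)
        have h2 := (le_div_iff₀ hci).1 h1
        simpa [ha'] using by linarith
      · have h1 : T * c i ≤ 0 := mul_nonpos_of_nonneg_of_nonpos hT0 (le_of_not_gt hci)
        have h2 : 0 ≤ a i := ha i (ht₀s hi)
        simp only [ha']; linarith
    have ha'i₀ : a' i₀ = 0 := by
      simp only [ha', hT]
      field_simp
      ring
    have hsum' : ∑ i ∈ t₀.erase i₀, a' i • v i = ∑ i ∈ s, a i • v i := by
      rw [Finset.sum_erase _ (by rw [ha'i₀, zero_smul])]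
      have : ∑ i ∈ t₀, a' i • v i
          = ∑ i ∈ t₀, a i • v i - T • ∑ i ∈ t₀, c i • v i := by
        rw [Finset.smul_sum, ← Finset.sum_sub_distrib]
        refine Finset.sum_congr rfl fun i _ => ?_
        simp [ha', sub_smul, smul_smul]
      rw [this, hz, smul_zero, sub_zero, hsum]
    have hss : t₀.erase i₀ ⊂ s := by
      refine Finset.ssubset_iff_of_subset ((erase_subset _ _).trans ht₀s) |>.2 ?_
      exact ⟨i₀, ht₀s hi₀t₀, notMem_erase _ _⟩
    obtain ⟨t, hts, b, hb, hnl, heq⟩ :=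
      IH _ hss a' (fun i hi => ha'nn i (mem_of_mem_erase hi))
    exact ⟨t, hts.trans hss.subset, b, hb, hnl, by rw [heq, hsum']⟩
  · exact ⟨t₀, ht₀s, a, fun i hi => (mem_filter.1 hi).2, hdep, hsum⟩

lemma exists_mult {N : ℕ} {n r : Fin N → ℕ}
    (θ : Fin N → Strat n → ℝ)
    (c : (ν : Fin N) → Fin (r ν) → Strat n → ℝ)
    (hθ : ∀ ν, ContDiff ℝ 1 (θ ν))
    (hc : ∀ ν i, ContDiff ℝ 1 (c ν i))
    (x : ℕ → Strat n) (xbar : Strat n)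
    (hx : Tendsto x atTop (𝓝 xbar))
    (lam : ℕ → (ν : Fin N) → Fin (r ν) → ℝ)
    (h1 : ∀ ν, Tendsto (fun k => pgrad ν (θ ν) (x k) +
        ∑ i, lam k ν i • pgrad ν (c ν i) (x k)) atTop (𝓝 0))
    (h2 : ∀ ν i, Tendsto (fun k => min (-(c ν i (x k))) (lam k ν i)) atTop (𝓝 0))
    (hCPLD : ∀ ν, CPLDnu ν (c ν) xbar) (ν : Fin N) :
    ∃ lamν : Fin (r ν) → ℝ,
      (pgrad ν (θ ν) xbar + ∑ i, lamν i • pgrad ν (c ν i) xbar = 0) ∧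
      (∀ i, min (-(c ν i xbar)) (lamν i) = 0) := by
  classical
  -- basic convergence facts
  have hgc : ∀ i, Tendsto (fun k => pgrad ν (c ν i) (x k)) atTop (𝓝 (pgrad ν (c ν i) xbar)) :=
    fun i => ((pgrad_continuous ν _ (hc ν i)).tendsto xbar).comp hx
  have hGc : Tendsto (fun k => pgrad ν (θ ν) (x k)) atTop (𝓝 (pgrad ν (θ ν) xbar)) :=
    ((pgrad_continuous ν _ (hθ ν)).tendsto xbar).comp hx
  have hcv : ∀ i, Tendsto (fun k => c ν i (x k)) atTop (𝓝 (c ν i xbar)) :=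
    fun i => (((hc ν i).continuous).tendsto xbar).comp hx
  -- Step A : feasibility in the limit
  have hcle : ∀ i, c ν i xbar ≤ 0 := by
    intro i
    have h := le_of_tendsto_of_tendsto' (h2 ν i) ((hcv i).neg)
      (fun k => min_le_left _ _)
    linarith
  -- negative parts of multipliers vanish
  have hlneg : ∀ i, Tendsto (fun k => max (-(lam k ν i)) 0) atTop (𝓝 0) := by
    intro i
    have habs : Tendsto (fun k => |min (-(c ν i (x k))) (lam k ν i)|) atTop (𝓝 0) := by
      simpa using (h2 ν i).abs
    refine squeeze_zero (fun k => le_max_right _ _) (fun k => ?_) habs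
    refine max_le ?_ (abs_nonneg _)
    have h1' : min (-(c ν i (x k))) (lam k ν i) ≤ lam k ν i := min_le_right _ _
    have := neg_le_abs (min (-(c ν i (x k))) (lam k ν i))
    linarith
  -- inactive multipliers vanish
  have hinact : ∀ i, c ν i xbar < 0 → Tendsto (fun k => lam k ν i) atTop (𝓝 0) := by
    intro i hlt
    set ε := -(c ν i xbar) with hε
    have hε0 : 0 < ε := by simp [hε]; linarith
    have hev1 : ∀ᶠ k in atTop, ε / 2 < -(c ν i (x k)) :=
      ((hcv i).neg).eventually (eventually_gt_nhds (by linarith))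
    have hev2 : ∀ᶠ k in atTop, min (-(c ν i (x k))) (lam k ν i) < ε / 2 :=
      (h2 ν i).eventually (eventually_lt_nhds (by linarith))
    have hev : (fun k => min (-(c ν i (x k))) (lam k ν i)) =ᶠ[atTop]
        (fun k => lam k ν i) := by
      filter_upwards [hev1, hev2] with k hk1 hk2
      have hba : lam k ν i < -(c ν i (x k)) := by
        by_contra hcon
        push_neg at hcon
        rw [min_eq_left hcon] at hk2
        linarith
      exact min_eq_right hba.le
    exact (h2 ν i).congr' hev
  -- truncated multipliers
  set μ : ℕ → Fin (r ν) → ℝ := fun k i =>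
    if c ν i xbar = 0 then max (lam k ν i) 0 else 0 with hμ
  have hμnn : ∀ k i, 0 ≤ μ k i := by
    intro k i; rw [hμ]; dsimp only
    split
    · exact le_max_right _ _
    · exact le_rfl
  have hdiff : ∀ i, Tendsto (fun k => μ k i - lam k ν i) atTop (𝓝 0) := by
    intro i
    by_cases hci : c ν i xbar = 0
    · have heq : (fun k => μ k i - lam k ν i) = fun k => max (-(lam k ν i)) 0 := by
        funext k
        rw [hμ]; dsimp only; rw [if_pos hci]
        rcases le_total (lam k ν i) 0 with h | h
        · rw [max_eq_right h, max_eq_left (by linarith)]; ring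
        · rw [max_eq_left h, max_eq_right (by linarith)]; ring
      rw [heq]; exact hlneg i
    · have hlt : c ν i xbar < 0 := lt_of_le_of_ne (hcle i) hci
      have heq : (fun k => μ k i - lam k ν i) = fun k => -(lam k ν i) := by
        funext k; rw [hμ]; dsimp only; rw [if_neg hci]; ring
      rw [heq]
      simpa using (hinact i hlt).neg
  -- the approximate residual with truncated multipliers
  have hw : Tendsto (fun k => pgrad ν (θ ν) (x k) +
      ∑ i, μ k i • pgrad ν (c ν i) (x k)) atTop (𝓝 0) := by
    have heq : (fun k => pgrad ν (θ ν) (x k) + ∑ i, μ k i • pgrad ν (c ν i) (x k))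
        = fun k => (pgrad ν (θ ν) (x k) + ∑ i, lam k ν i • pgrad ν (c ν i) (x k))
            + ∑ i, (μ k i - lam k ν i) • pgrad ν (c ν i) (x k) := by
      funext k
      rw [add_assoc, ← Finset.sum_add_distrib]
      congr 1
      refine Finset.sum_congr rfl fun i _ => ?_
      rw [← add_smul]; congr 1; ring
    rw [heq]
    have h3 : Tendsto (fun k => ∑ i, (μ k i - lam k ν i) • pgrad ν (c ν i) (x k))
        atTop (𝓝 0) := by
      have : Tendsto (fun k => ∑ i, (μ k i - lam k ν i) • pgrad ν (c ν i) (x k))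
          atTop (𝓝 (∑ i : Fin (r ν), (0 : ℝ) • pgrad ν (c ν i) xbar)) :=
        tendsto_finset_sum _ fun i _ => (hdiff i).smul (hgc i)
      simpa using this
    simpa using (h1 ν).add h3
  -- active set
  set A : Finset (Fin (r ν)) := Finset.univ.filter (fun i => c ν i xbar = 0) with hA
  have hAsum : ∀ k, ∑ i ∈ A, μ k i • pgrad ν (c ν i) (x k)
      = ∑ i, μ k i • pgrad ν (c ν i) (x k) := by
    intro k
    apply Finset.sum_filter_of_ne
    intro i _ hne
    by_contra hci
    rw [hμ] at hne; dsimp only at hne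
    rw [if_neg hci, zero_smul] at hne
    exact hne rfl
  -- Caratheodory at each k
  have hcarak : ∀ k, ∃ t ⊆ A, ∃ b : Fin (r ν) → ℝ, (∀ i ∈ t, 0 < b i) ∧
      ¬ LinDep t (fun i => pgrad ν (c ν i) (x k)) ∧
      ∑ i ∈ t, b i • pgrad ν (c ν i) (x k) = ∑ i ∈ A, μ k i • pgrad ν (c ν i) (x k) :=
    fun k => cara _ A (μ k) (fun i _ => hμnn k i)
  choose t ht b hbpos hnl heq using hcarak
  -- pigeonhole : a constant index set along a subsequence
  have hfin : ∃ I : Finset (Fin (r ν)), {k | t k = I}.Infinite := by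
    obtain ⟨I, hI⟩ := Finite.exists_infinite_fiber t
    exact ⟨I, Set.infinite_coe_iff.1 hI⟩
  obtain ⟨I, hIinf⟩ := hfin
  set φ : ℕ → ℕ := Nat.nth (fun k => t k = I) with hφ
  have hφmono : StrictMono φ := Nat.nth_strictMono hIinf
  have hφmem : ∀ j, t (φ j) = I := fun j => Nat.nth_mem_of_infinite hIinf j
  have hIA : I ⊆ A := by rw [← hφmem 0]; exact ht (φ 0)
  have hIact : ∀ i ∈ I, c ν i xbar = 0 := by
    intro i hi
    have := hIA hi
    rw [hA, mem_filter] at this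
    exact this.2
  -- normalization
  set S : ℕ → ℝ := fun j => ∑ i ∈ I, b (φ j) i with hS
  have hbInn : ∀ j i, i ∈ I → 0 ≤ b (φ j) i := by
    intro j i hi
    exact (hbpos (φ j) i (by rw [hφmem j]; exact hi)).le
  have hS0 : ∀ j, 0 ≤ S j := fun j => Finset.sum_nonneg fun i hi => hbInn j i hi
  have h1S : ∀ j, (0:ℝ) < 1 + S j := fun j => by linarith [hS0 j]
  set γ : ℕ → Fin (r ν) → ℝ := fun j i => if i ∈ I then b (φ j) i / (1 + S j) else 0 with hγ
  have hγnn : ∀ j i, 0 ≤ γ j i := by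
    intro j i; rw [hγ]; dsimp only
    split
    · exact div_nonneg (hbInn j i (by assumption)) (h1S j).le
    · exact le_rfl
  have hγle1 : ∀ j i, γ j i ≤ 1 := by
    intro j i; rw [hγ]; dsimp only
    split
    · rename_i hi
      rw [div_le_one (h1S j)]
      have : b (φ j) i ≤ S j :=
        Finset.single_le_sum (fun i hi => hbInn j i hi) hi
      linarith
    · linarith
  have hball : ∀ j, γ j ∈ Metric.closedBall (0 : Fin (r ν) → ℝ) 1 := by
    intro j
    rw [Metric.mem_closedBall, dist_zero_right]
    refine (pi_norm_le_iff_of_nonneg zero_le_one).2 fun i => ?_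
    rw [Real.norm_eq_abs, abs_le]
    exact ⟨by linarith [hγnn j i], hγle1 j i⟩
  obtain ⟨γb, hγbmem, ψ, hψmono, hγψ⟩ :=
    tendsto_subseq_of_bounded Metric.isBounded_closedBall hball
  have hγi : ∀ i, Tendsto (fun j => γ (ψ j) i) atTop (𝓝 (γb i)) := by
    intro i
    have := hγψ
    rw [tendsto_pi_nhds] at this
    exact this i
  have hγbnn : ∀ i, 0 ≤ γb i :=
    fun i => le_of_tendsto_of_tendsto' tendsto_const_nhds (hγi i) (fun j => hγnn (ψ j) i)
  have hγbz : ∀ i, i ∉ I → γb i = 0 := by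
    intro i hi
    have hz : (fun j => γ (ψ j) i) = fun _ => (0:ℝ) := by
      funext j; rw [hγ]; dsimp only; rw [if_neg hi]
    have := hγi i
    rw [hz] at this
    exact (tendsto_nhds_unique tendsto_const_nhds this).symm
  -- sums of normalized coefficients
  have hγsum : ∀ j, ∑ i ∈ I, γ j i = S j / (1 + S j) := by
    intro j
    rw [hS, Finset.sum_div]
    refine Finset.sum_congr rfl fun i hi => ?_
    rw [hγ]; dsimp only; rw [if_pos hi]
  set σb : ℝ := ∑ i ∈ I, γb i with hσb
  have hτconv : Tendsto (fun j => S (ψ j) / (1 + S (ψ j))) atTop (𝓝 σb) := by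
    have h := tendsto_finset_sum I (fun i _ => hγi i)
    have heq2 : (fun j => ∑ i ∈ I, γ (ψ j) i) = fun j => S (ψ j) / (1 + S (ψ j)) := by
      funext j; exact hγsum (ψ j)
    rwa [heq2] at h
  have hσb0 : 0 ≤ σb := Finset.sum_nonneg fun i _ => hγbnn i
  have hσble : σb ≤ 1 := by
    refine le_of_tendsto_of_tendsto' hτconv tendsto_const_nhds (fun j => ?_)
    rw [div_le_one (h1S (ψ j))]; linarith [hS0 (ψ j)]
  -- the combined subsequence
  set κ : ℕ → ℕ := fun j => φ (ψ j) with hκ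
  have hκmono : StrictMono κ := hφmono.comp hψmono
  have hκtop : Tendsto κ atTop atTop := hκmono.tendsto_atTop
  have hrel : ∀ j, pgrad ν (θ ν) (x (κ j)) + ∑ i ∈ I, b (κ j) i • pgrad ν (c ν i) (x (κ j))
      = pgrad ν (θ ν) (x (κ j)) + ∑ i, μ (κ j) i • pgrad ν (c ν i) (x (κ j)) := by
    intro j
    congr 1
    rw [← hAsum (κ j), ← heq (κ j), hκ]; dsimp only
    rw [hφmem (ψ j)]
  have hwκ : Tendsto (fun j => pgrad ν (θ ν) (x (κ j)) +
      ∑ i, μ (κ j) i • pgrad ν (c ν i) (x (κ j))) atTop (𝓝 0) := hw.comp hκtop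
  have hgκ : ∀ i, Tendsto (fun j => pgrad ν (c ν i) (x (κ j))) atTop
      (𝓝 (pgrad ν (c ν i) xbar)) := fun i => (hgc i).comp hκtop
  have hGκ : Tendsto (fun j => pgrad ν (θ ν) (x (κ j))) atTop
      (𝓝 (pgrad ν (θ ν) xbar)) := hGc.comp hκtop
  rcases lt_or_eq_of_le hσble with hσlt | hσeq
  · -- bounded case : multipliers converge
    have hσne : (1:ℝ) - σb ≠ 0 := by linarith
    have hSconv : Tendsto (fun j => S (ψ j)) atTop (𝓝 (σb / (1 - σb))) := by
      have hdiv : Tendsto (fun j => (S (ψ j) / (1 + S (ψ j))) / (1 - S (ψ j) / (1 + S (ψ j))))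
          atTop (𝓝 (σb / (1 - σb))) :=
        hτconv.div (tendsto_const_nhds.sub hτconv) hσne
      have heq2 : (fun j => (S (ψ j) / (1 + S (ψ j))) / (1 - S (ψ j) / (1 + S (ψ j))))
          = fun j => S (ψ j) := by
        funext j
        have h := h1S (ψ j)
        field_simp
        ring
      rwa [heq2] at hdiv
    set Sb : ℝ := σb / (1 - σb) with hSb
    have hSb0 : 0 ≤ Sb := div_nonneg hσb0 (by linarith)
    set lbar : Fin (r ν) → ℝ := fun i => if i ∈ I then γb i * (1 + Sb) else 0 with hlbar
    have hlbarnn : ∀ i, 0 ≤ lbar i := by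
      intro i; rw [hlbar]; dsimp only
      split
      · exact mul_nonneg (hγbnn i) (by linarith)
      · exact le_rfl
    have hbconv : ∀ i ∈ I, Tendsto (fun j => b (κ j) i) atTop (𝓝 (lbar i)) := by
      intro i hi
      have heq2 : (fun j => b (κ j) i) = fun j => γ (ψ j) i * (1 + S (ψ j)) := by
        funext j
        rw [hγ]; dsimp only; rw [if_pos hi, hκ]
        exact (div_mul_cancel₀ _ (h1S (ψ j)).ne').symm
      rw [heq2, hlbar]; dsimp only; rw [if_pos hi]
      exact (hγi i).mul (tendsto_const_nhds.add hSconv)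
    have hlim : Tendsto (fun j => pgrad ν (θ ν) (x (κ j)) +
        ∑ i ∈ I, b (κ j) i • pgrad ν (c ν i) (x (κ j))) atTop
        (𝓝 (pgrad ν (θ ν) xbar + ∑ i ∈ I, lbar i • pgrad ν (c ν i) xbar)) :=
      hGκ.add (tendsto_finset_sum _ fun i hi => (hbconv i hi).smul (hgκ i))
    have hzero : pgrad ν (θ ν) xbar + ∑ i ∈ I, lbar i • pgrad ν (c ν i) xbar = 0 := by
      refine tendsto_nhds_unique hlim ?_
      have := hwκ
      refine this.congr fun j => (hrel j).symm
    refine ⟨lbar, ?_, ?_⟩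
    · rw [← hzero]
      congr 1
      refine (Finset.sum_subset (Finset.subset_univ I) fun i _ hi => ?_).symm
      rw [hlbar]; dsimp only; rw [if_neg hi, zero_smul]
    · intro i
      by_cases hi : i ∈ I
      · rw [hIact i hi, neg_zero, min_eq_left (hlbarnn i)]
      · rw [hlbar]; dsimp only; rw [if_neg hi]
        rw [min_eq_right]
        linarith [hcle i]
  · -- unbounded case : contradiction with CPLD
    exfalso
    have hρ : Tendsto (fun j => (1 + S (ψ j))⁻¹) atTop (𝓝 0) := by
      have heq2 : (fun j => (1 + S (ψ j))⁻¹) = fun j => 1 - S (ψ j) / (1 + S (ψ j)) := by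
        funext j
        have h := h1S (ψ j)
        field_simp
        ring
      rw [heq2]
      have h := (tendsto_const_nhds : Tendsto (fun _ : ℕ => (1:ℝ)) atTop (𝓝 1)).sub hτconv
      rw [hσeq, sub_self] at h
      exact h
    -- normalized relation
    have hrel2 : ∀ j, (1 + S (ψ j))⁻¹ • pgrad ν (θ ν) (x (κ j)) +
        ∑ i ∈ I, γ (ψ j) i • pgrad ν (c ν i) (x (κ j))
        = (1 + S (ψ j))⁻¹ • (pgrad ν (θ ν) (x (κ j)) +
            ∑ i, μ (κ j) i • pgrad ν (c ν i) (x (κ j))) := by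
      intro j
      rw [← hrel j, smul_add, Finset.smul_sum]
      congr 1
      refine Finset.sum_congr rfl fun i hi => ?_
      rw [hγ]; dsimp only; rw [if_pos hi, hκ, smul_smul]
      congr 1
      field_simp
    have hLHS : Tendsto (fun j => (1 + S (ψ j))⁻¹ • pgrad ν (θ ν) (x (κ j)) +
        ∑ i ∈ I, γ (ψ j) i • pgrad ν (c ν i) (x (κ j))) atTop
        (𝓝 (∑ i ∈ I, γb i • pgrad ν (c ν i) xbar)) := by
      have h1' : Tendsto (fun j => (1 + S (ψ j))⁻¹ • pgrad ν (θ ν) (x (κ j))) atTop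
          (𝓝 ((0:ℝ) • pgrad ν (θ ν) xbar)) := hρ.smul hGκ
      have h2' := tendsto_finset_sum I (fun i _ => (hγi i).smul (hgκ i))
      simpa using h1'.add h2'
    have hRHS : Tendsto (fun j => (1 + S (ψ j))⁻¹ • (pgrad ν (θ ν) (x (κ j)) +
        ∑ i, μ (κ j) i • pgrad ν (c ν i) (x (κ j)))) atTop (𝓝 0) := by
      refine squeeze_zero_norm (fun j => ?_) (by simpa using hwκ.norm)
      rw [norm_smul]
      have h := h1S (ψ j)
      have hle : ‖(1 + S (ψ j))⁻¹‖ ≤ 1 := by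
        rw [Real.norm_eq_abs, abs_of_pos (by positivity)]
        exact inv_le_one_of_one_le₀ (by linarith [hS0 (ψ j)])
      calc ‖(1 + S (ψ j))⁻¹‖ * ‖pgrad ν (θ ν) (x (κ j)) +
            ∑ i, μ (κ j) i • pgrad ν (c ν i) (x (κ j))‖
          ≤ 1 * ‖pgrad ν (θ ν) (x (κ j)) +
            ∑ i, μ (κ j) i • pgrad ν (c ν i) (x (κ j))‖ := by
            apply mul_le_mul_of_nonneg_right hle (norm_nonneg _)
        _ = _ := one_mul _
    have hzero : ∑ i ∈ I, γb i • pgrad ν (c ν i) xbar = 0 := by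
      refine tendsto_nhds_unique hLHS ?_
      exact hRHS.congr fun j => (hrel2 j).symm
    have hnonzero : ∃ i ∈ I, γb i ≠ 0 := by
      by_contra hcon
      push_neg at hcon
      have : σb = 0 := by
        rw [hσb]
        exact Finset.sum_eq_zero fun i hi => hcon i hi
      rw [this] at hσeq
      exact zero_ne_one hσeq
    have hpos : PosLinDep I (fun i => pgrad ν (c ν i) xbar) :=
      ⟨γb, hγbnn, hnonzero, hzero⟩
    obtain ⟨U, hU, hlin⟩ := hCPLD ν I hIact hpos
    have hev : ∀ᶠ k in atTop, x k ∈ U := hx hU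
    obtain ⟨k₀, hk₀⟩ := eventually_atTop.1 hev
    have hk : x (κ k₀) ∈ U := hk₀ (κ k₀) (hκmono.le_apply)
    have hdep := hlin (x (κ k₀)) hk
    apply hnl (κ k₀)
    rw [show t (κ k₀) = I from hφmem (ψ k₀)]
    exact hdep


/-- If a sequence satisfies the approximate KKT conditions of the GNEP and
converges to `xbar` where GNEP-CPLD holds, then `xbar` is a KKT point (for some multiplier). -/
theorem stmt4 {N : ℕ} {n r : Fin N → ℕ}
    (θ : Fin N → Strat n → ℝ)
    (c : (ν : Fin N) → Fin (r ν) → Strat n → ℝ)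
    (hθ : ∀ ν, ContDiff ℝ 1 (θ ν))
    (hc : ∀ ν i, ContDiff ℝ 1 (c ν i))
    (x : ℕ → Strat n) (xbar : Strat n)
    (hx : Tendsto x atTop (𝓝 xbar))
    (lam : ℕ → (ν : Fin N) → Fin (r ν) → ℝ)
    (h1 : ∀ ν, Tendsto (fun k => pgrad ν (θ ν) (x k) +
        ∑ i, lam k ν i • pgrad ν (c ν i) (x k)) atTop (𝓝 0))
    (h2 : ∀ ν i, Tendsto (fun k => min (-(c ν i (x k))) (lam k ν i)) atTop (𝓝 0))
    (hCPLD : ∀ ν, CPLDnu ν (c ν) xbar) :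
    ∃ lambar : (ν : Fin N) → Fin (r ν) → ℝ, KKTPoint θ c xbar lambar := by
  choose lamb hgrad hmin using exists_mult θ c hθ hc x xbar hx lam h1 h2 hCPLD
  exact ⟨lamb, fun ν => ⟨hgrad ν, hmin ν⟩⟩
end

section
/- Consider a GNEP with continuously differentiable θ_ν and c^ν. Let (x^k) ⊂ ℝ^n be a sequence converging to x̄ and, for each player ν, let (λ^{ν,k}) ⊂ ℝ^{r_ν} be vectors such that ∇_{x^ν}θ_ν(x^k) + ∇_{x^ν}c^ν(x^k) λ^{ν,k} → 0 and min{−c^ν(x^k), λ^{ν,k}} → 0 as k → ∞. If GNEP-MFCQ holds at x̄, then each sequence (λ^{ν,k}) is bounded; moreover, if λ̄^ν is a limit point of (λ^{ν,k}) for every ν, then x̄ together with λ̄ = (λ̄^1,…,λ̄^N) is a KKT point of the GNEP. -/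
open Filter Topology Finset Function RealInnerProductSpace

noncomputable def blk {N : ℕ} (n : Fin N → ℕ) (ν : Fin N) :
    EuclideanSpace ℝ (Fin (n ν)) →L[ℝ] Strat n :=
  ContinuousLinearMap.pi (Pi.single ν (ContinuousLinearMap.id ℝ _))

lemma pgrad_eq {N : ℕ} {n : Fin N → ℕ} (ν : Fin N) {f : Strat n → ℝ}
    (hf : Differentiable ℝ f) (x : Strat n) :
    pgrad ν f x = (InnerProductSpace.toDual ℝ (EuclideanSpace ℝ (Fin (n ν)))).symm
      ((fderiv ℝ f x).comp (blk n ν)) := by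
  have h1 : HasFDerivAt (fun z => f (Function.update x ν z))
      ((fderiv ℝ f x).comp (blk n ν)) (x ν) := by
    have h2 := ((hf (Function.update x ν (x ν))).hasFDerivAt).comp (x ν)
      (hasFDerivAt_update x (x ν))
    rwa [Function.update_eq_self] at h2
  rw [pgrad, gradient, h1.fderiv]

lemma continuous_pgrad {N : ℕ} {n : Fin N → ℕ} (ν : Fin N) {f : Strat n → ℝ}
    (hf : ContDiff ℝ 1 f) : Continuous (pgrad ν f) := by
  have h : pgrad ν f = fun x =>
      (InnerProductSpace.toDual ℝ (EuclideanSpace ℝ (Fin (n ν)))).symm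
        ((fderiv ℝ f x).comp (blk n ν)) :=
    funext (pgrad_eq ν (hf.differentiable one_ne_zero))
  rw [h]
  exact (LinearIsometryEquiv.continuous _).comp
    ((hf.continuous_fderiv one_ne_zero).clm_comp continuous_const)

lemma bdd_of_eventually {u : ℕ → ℝ} {M : ℝ} (h : ∀ᶠ k in atTop, |u k| ≤ M) :
    ∃ M', ∀ k, |u k| ≤ M' := by
  obtain ⟨k₀, hk⟩ := eventually_atTop.1 h
  refine ⟨max M (((Finset.range (k₀ + 1)).sup' Finset.nonempty_range_add_one) fun k => |u k|),
    fun k => ?_⟩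
  rcases le_or_gt k₀ k with hk' | hk'
  · exact le_max_of_le_left (hk k hk')
  · exact le_max_of_le_right
      (Finset.le_sup' (fun k => |u k|) (Finset.mem_range.2 (Nat.lt_succ_of_lt hk')))

lemma ev_abs_le {u : ℕ → ℝ} {a : ℝ} (h : Tendsto u atTop (𝓝 a)) :
    ∀ᶠ k in atTop, |u k| ≤ |a| + 1 :=
  h.abs.eventually (eventually_le_nhds (lt_add_one _))

/-- Under GNEP-MFCQ at the limit `xbar` of an approximate-KKT sequence,
the multiplier sequences are bounded, and any collection of their limit points yields a
KKT point of the GNEP. -/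
theorem stmt5 {N : ℕ} {n r : Fin N → ℕ}
    (θ : Fin N → Strat n → ℝ)
    (c : (ν : Fin N) → Fin (r ν) → Strat n → ℝ)
    (hθ : ∀ ν, ContDiff ℝ 1 (θ ν))
    (hc : ∀ ν i, ContDiff ℝ 1 (c ν i))
    (x : ℕ → Strat n) (xbar : Strat n)
    (hx : Tendsto x atTop (𝓝 xbar))
    (lam : ℕ → (ν : Fin N) → Fin (r ν) → ℝ)
    (h1 : ∀ ν, Tendsto (fun k => pgrad ν (θ ν) (x k) +
        ∑ i, lam k ν i • pgrad ν (c ν i) (x k)) atTop (𝓝 0))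
    (h2 : ∀ ν i, Tendsto (fun k => min (-(c ν i (x k))) (lam k ν i)) atTop (𝓝 0))
    (hMFCQ : ∀ ν, ∃ d : EuclideanSpace ℝ (Fin (n ν)), ∀ i, c ν i xbar = 0 →
      inner (𝕜 := ℝ) (pgrad ν (c ν i) xbar) d < 0) :
    (∀ ν, ∃ M : ℝ, ∀ k i, |lam k ν i| ≤ M) ∧
    (∀ lambar : (ν : Fin N) → Fin (r ν) → ℝ,
      (∀ ν, MapClusterPt (lambar ν) atTop (fun k => lam k ν)) →
      KKTPoint θ c xbar lambar) := by
  have hpc : ∀ ν (i : Fin (r ν)), Tendsto (fun k => pgrad ν (c ν i) (x k)) atTop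
      (𝓝 (pgrad ν (c ν i) xbar)) :=
    fun ν i => ((continuous_pgrad ν (hc ν i)).tendsto xbar).comp hx
  have hpθ : ∀ ν, Tendsto (fun k => pgrad ν (θ ν) (x k)) atTop (𝓝 (pgrad ν (θ ν) xbar)) :=
    fun ν => ((continuous_pgrad ν (hθ ν)).tendsto xbar).comp hx
  have hcv : ∀ ν i, Tendsto (fun k => c ν i (x k)) atTop (𝓝 (c ν i xbar)) :=
    fun ν i => (((hc ν i).continuous).tendsto xbar).comp hx
  have hfeas : ∀ ν i, c ν i xbar ≤ 0 := by
    intro ν i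
    have h := le_of_tendsto_of_tendsto' (h2 ν i) (hcv ν i).neg (fun k => min_le_left _ _)
    linarith
  have hlam0 : ∀ ν i, c ν i xbar < 0 → Tendsto (fun k => lam k ν i) atTop (𝓝 0) := by
    intro ν i hlt
    have ha : (0:ℝ) < -c ν i xbar / 2 := by linarith
    have hev1 : ∀ᶠ k in atTop, -c ν i xbar / 2 < -(c ν i (x k)) :=
      (hcv ν i).neg.eventually (eventually_gt_nhds (by linarith))
    have hev2 : ∀ᶠ k in atTop, min (-(c ν i (x k))) (lam k ν i) < -c ν i xbar / 2 :=
      (h2 ν i).eventually (eventually_lt_nhds ha)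
    refine Tendsto.congr' ?_ (h2 ν i)
    filter_upwards [hev1, hev2] with k h1k h2k
    rcases min_cases (-(c ν i (x k))) (lam k ν i) with ⟨h, _⟩ | ⟨h, _⟩
    · exfalso; rw [h] at h2k; linarith
    · exact h
  have hlamlb : ∀ ν, ∀ᶠ k in atTop, ∀ i, -1 ≤ lam k ν i := by
    intro ν
    rw [Filter.eventually_all]
    intro i
    have := (h2 ν i).eventually (eventually_gt_nhds (show (-1:ℝ) < 0 by norm_num))
    filter_upwards [this] with k hk
    have hm := min_le_right (-(c ν i (x k))) (lam k ν i)
    linarith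
  constructor
  · intro ν
    obtain ⟨d, hd⟩ := hMFCQ ν
    set s : Fin (r ν) → ℝ := fun i => inner (𝕜 := ℝ) (pgrad ν (c ν i) xbar) d with hs
    have hsk : ∀ i, Tendsto (fun k => inner (𝕜 := ℝ) (pgrad ν (c ν i) (x k)) d) atTop
        (𝓝 (s i)) := fun i => (hpc ν i).inner tendsto_const_nhds
    set S : Fin (r ν) → ℝ := fun i => |s i| + 1 with hS
    have hSpos : ∀ i, 0 < S i := fun i => by positivity
    set C : ℝ := ∑ i, S i with hC
    have hCnn : 0 ≤ C := Finset.sum_nonneg fun i _ => (hSpos i).le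
    set T : ℝ := |inner (𝕜 := ℝ) (pgrad ν (θ ν) xbar) d| + 1 with hT
    have hTpos : 0 < T := by positivity
    set K : ℝ := 1 + T + C with hK
    have hKpos : 0 < K := by positivity
    have E1 := hlamlb ν
    have E2 : ∀ᶠ k in atTop, ∀ i, |inner (𝕜 := ℝ) (pgrad ν (c ν i) (x k)) d| ≤ S i :=
      Filter.eventually_all.2 fun i => ev_abs_le (hsk i)
    have E3 : ∀ᶠ k in atTop, ∀ i, c ν i xbar = 0 →
        inner (𝕜 := ℝ) (pgrad ν (c ν i) (x k)) d ≤ s i / 2 := by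
      rw [Filter.eventually_all]
      intro i
      by_cases hact : c ν i xbar = 0
      · have hsi : s i < 0 := hd i hact
        filter_upwards [(hsk i).eventually
          (eventually_le_nhds (by linarith : s i < s i / 2))] with k hk _
        exact hk
      · exact Eventually.of_forall fun k h => absurd h hact
    have E4 : ∀ᶠ k in atTop, |inner (𝕜 := ℝ) (pgrad ν (θ ν) (x k) +
        ∑ i, lam k ν i • pgrad ν (c ν i) (x k)) d| ≤ 1 := by
      have hG : Tendsto (fun k => inner (𝕜 := ℝ) (pgrad ν (θ ν) (x k) +
          ∑ i, lam k ν i • pgrad ν (c ν i) (x k)) d) atTop (𝓝 (0:ℝ)) := by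
        have h0 := Filter.Tendsto.inner (𝕜 := ℝ) (h1 ν) (tendsto_const_nhds (x := d))
        simpa using h0
      have := hG.abs
      rw [abs_zero] at this
      exact this.eventually (eventually_le_nhds one_pos)
    have E5 : ∀ᶠ k in atTop, ∀ i, c ν i xbar ≠ 0 → |lam k ν i| ≤ 1 := by
      rw [Filter.eventually_all]
      intro i
      by_cases hact : c ν i xbar = 0
      · exact Eventually.of_forall fun k h => absurd hact h
      · have h0 := (hlam0 ν i (lt_of_le_of_ne (hfeas ν i) hact)).abs
        rw [abs_zero] at h0
        filter_upwards [h0.eventually (eventually_le_nhds one_pos)] with k hk _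
        exact hk
    have E6 : ∀ᶠ k in atTop, |inner (𝕜 := ℝ) (pgrad ν (θ ν) (x k)) d| ≤ T :=
      ev_abs_le ((hpθ ν).inner tendsto_const_nhds)
    have key : ∀ j : Fin (r ν), ∃ Mj : ℝ, ∀ k, |lam k ν j| ≤ Mj := by
      intro j
      by_cases hact : c ν j xbar = 0
      · apply bdd_of_eventually (M := max 1 (2 * K / (-(s j))))
        have hsj : s j < 0 := hd j hact
        filter_upwards [E1, E2, E3, E4, E5, E6] with k e1 e2 e3 e4 e5 e6
        set sk : Fin (r ν) → ℝ := fun i => inner (𝕜 := ℝ) (pgrad ν (c ν i) (x k)) d with hsk'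
        have hiden : inner (𝕜 := ℝ) (pgrad ν (θ ν) (x k) +
            ∑ i, lam k ν i • pgrad ν (c ν i) (x k)) d
            = inner (𝕜 := ℝ) (pgrad ν (θ ν) (x k)) d + ∑ i, lam k ν i * sk i := by
          simp [hsk', inner_add_left, sum_inner, real_inner_smul_left, Finset.mul_sum, mul_assoc]
        have hterm : ∀ i ∈ Finset.univ.erase j, lam k ν i * sk i ≤ S i := by
          intro i _
          by_cases hi : c ν i xbar = 0
          · have h3 := e3 i hi
            have hsi : s i < 0 := hd i hi
            have hsk0 : sk i ≤ 0 := by linarith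
            calc lam k ν i * sk i ≤ (-1) * sk i := mul_le_mul_of_nonpos_right (e1 i) hsk0
              _ = -sk i := by ring
              _ ≤ |sk i| := neg_le_abs _
              _ ≤ S i := e2 i
          · calc lam k ν i * sk i ≤ |lam k ν i * sk i| := le_abs_self _
              _ = |lam k ν i| * |sk i| := abs_mul _ _
              _ ≤ 1 * S i := mul_le_mul (e5 i hi) (e2 i) (abs_nonneg _) zero_le_one
              _ = S i := one_mul _
        have hsum : ∑ i ∈ Finset.univ.erase j, lam k ν i * sk i ≤ C := by
          calc ∑ i ∈ Finset.univ.erase j, lam k ν i * sk i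
              ≤ ∑ i ∈ Finset.univ.erase j, S i := Finset.sum_le_sum hterm
            _ ≤ C := Finset.sum_le_sum_of_subset_of_nonneg (Finset.subset_univ _)
                (fun i _ _ => (hSpos i).le)
        have hsplit : lam k ν j * sk j = inner (𝕜 := ℝ) (pgrad ν (θ ν) (x k) +
            ∑ i, lam k ν i • pgrad ν (c ν i) (x k)) d
            - inner (𝕜 := ℝ) (pgrad ν (θ ν) (x k)) d
            - ∑ i ∈ Finset.univ.erase j, lam k ν i * sk i := by
          rw [hiden, ← Finset.sum_erase_add Finset.univ _ (Finset.mem_univ j)]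
          ring
        have hlow : -K ≤ lam k ν j * sk j := by
          rw [hsplit]
          have h4 := abs_le.1 e4
          have h6 := abs_le.1 e6
          have hKe : K = 1 + T + C := hK
          linarith [h4.1, h6.2, hsum]
        have hskj : sk j ≤ s j / 2 := e3 j hact
        rw [abs_le]
        constructor
        · have hge := e1 j
          have hm := le_max_left (1:ℝ) (2 * K / (-(s j)))
          linarith
        · rcases le_or_gt (lam k ν j) 1 with h | h
          · exact h.trans (le_max_left _ _)
          · have hpos : (0:ℝ) < lam k ν j := by linarith
            have h1' : lam k ν j * sk j ≤ lam k ν j * (s j / 2) :=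
              mul_le_mul_of_nonneg_left hskj hpos.le
            have h2' : -K ≤ lam k ν j * (s j / 2) := le_trans hlow h1'
            have hub : lam k ν j ≤ 2 * K / (-(s j)) := by
              rw [le_div_iff₀ (by linarith : (0:ℝ) < -(s j))]
              nlinarith
            exact hub.trans (le_max_right _ _)
      · have h0 := (hlam0 ν j (lt_of_le_of_ne (hfeas ν j) hact)).abs
        rw [abs_zero] at h0
        apply bdd_of_eventually (M := 1)
        exact h0.eventually (eventually_le_nhds one_pos)
    choose Mj hMj using key
    refine ⟨∑ i, Mj i, fun k i => ?_⟩
    calc |lam k ν i| ≤ Mj i := hMj i k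
      _ ≤ ∑ i', Mj i' := Finset.single_le_sum
          (fun i' _ => le_trans (abs_nonneg _) (hMj i' 0)) (Finset.mem_univ i)
  · intro lambar hcl ν
    obtain ⟨φ, hφ, hφt⟩ := TopologicalSpace.FirstCountableTopology.tendsto_subseq (hcl ν)
    have hφa : Tendsto φ atTop atTop := hφ.tendsto_atTop
    have hxφ : Tendsto (fun k => x (φ k)) atTop (𝓝 xbar) := hx.comp hφa
    have hlamφ : ∀ i, Tendsto (fun k => lam (φ k) ν i) atTop (𝓝 (lambar ν i)) := by
      intro i
      exact tendsto_pi_nhds.1 hφt i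
    constructor
    · have hA : Tendsto (fun k => pgrad ν (θ ν) (x (φ k)) +
          ∑ i, lam (φ k) ν i • pgrad ν (c ν i) (x (φ k))) atTop
          (𝓝 (pgrad ν (θ ν) xbar + ∑ i, lambar ν i • pgrad ν (c ν i) xbar)) := by
        refine Tendsto.add (((continuous_pgrad ν (hθ ν)).tendsto xbar).comp hxφ) ?_
        exact tendsto_finset_sum _ fun i _ =>
          (hlamφ i).smul (((continuous_pgrad ν (hc ν i)).tendsto xbar).comp hxφ)
      exact tendsto_nhds_unique hA ((h1 ν).comp hφa)
    · intro i
      have hA : Tendsto (fun k => min (-(c ν i (x (φ k)))) (lam (φ k) ν i)) atTop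
          (𝓝 (min (-(c ν i xbar)) (lambar ν i))) :=
        Tendsto.min ((((hc ν i).continuous.tendsto xbar).comp hxφ).neg) (hlamφ i)
      exact tendsto_nhds_unique hA ((h2 ν i).comp hφa)
end

section
/- Consider a GNEP with continuously differentiable constraint functions c^ν, let ν be a fixed player index, and let x ∈ ℝ^n be a point with c^ν(x) ≤ 0 at which c^ν satisfies MFCQ_ν. Then there is a neighbourhood U of x such that for every y ∈ U the feasible set X_ν(y^{−ν}) = {z^ν ∈ ℝ^{n_ν} : c^ν(z^ν, y^{−ν}) ≤ 0} is nonempty. -/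
open Filter Topology Finset Function RealInnerProductSpace

/-- The injection of player `ν`'s block into the strategy space, as a continuous linear map. -/
noncomputable def blockSingle {N : ℕ} (n : Fin N → ℕ) (ν : Fin N) :
    EuclideanSpace ℝ (Fin (n ν)) →L[ℝ] Strat n :=
  { toLinearMap := LinearMap.single ℝ (fun μ => EuclideanSpace ℝ (Fin (n μ))) ν,
    cont := continuous_single (A := fun μ => EuclideanSpace ℝ (Fin (n μ))) ν }

lemma blockSingle_apply {N : ℕ} {n : Fin N → ℕ} (ν : Fin N)
    (v : EuclideanSpace ℝ (Fin (n ν))) : blockSingle n ν v = Pi.single ν v := rfl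

lemma update_eq_add_single {N : ℕ} {n : Fin N → ℕ} (ν : Fin N) (y : Strat n)
    (v : EuclideanSpace ℝ (Fin (n ν))) :
    Function.update y ν (y ν + v) = y + Pi.single ν v := by
  ext μ j
  rcases eq_or_ne μ ν with rfl | h
  · simp
  · simp [Function.update_of_ne h, Pi.single_eq_of_ne h]

lemma update_eq_add_single' {N : ℕ} {n : Fin N → ℕ} (ν : Fin N) (y : Strat n)
    (z : EuclideanSpace ℝ (Fin (n ν))) :
    Function.update y ν z = y + Pi.single ν (z - y ν) := by
  have := update_eq_add_single ν y (z - y ν)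
  simpa using this

lemma inner_pgrad_eq {N : ℕ} {n : Fin N → ℕ} (ν : Fin N) (f : Strat n → ℝ)
    (hf : ContDiff ℝ 1 f) (x : Strat n) (d : EuclideanSpace ℝ (Fin (n ν))) :
    inner (𝕜 := ℝ) (pgrad ν f x) d = fderiv ℝ f x (Pi.single ν d) := by
  set S := blockSingle n ν with hSdef
  have h2 : HasFDerivAt f (fderiv ℝ f x) x := (hf.differentiable one_ne_zero x).hasFDerivAt
  have h1 : HasFDerivAt (fun z : EuclideanSpace ℝ (Fin (n ν)) =>
      (x - Pi.single ν (x ν)) + S z) (S : _ →L[ℝ] _) (x ν) :=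
    S.hasFDerivAt.const_add _
  have hAx : (x - Pi.single ν (x ν)) + S (x ν) = x := by
    rw [blockSingle_apply]; abel
  have hcomp : HasFDerivAt (fun z : EuclideanSpace ℝ (Fin (n ν)) =>
      f ((x - Pi.single ν (x ν)) + S z)) ((fderiv ℝ f x).comp S) (x ν) :=
    HasFDerivAt.comp (x ν) (by rwa [hAx]) h1
  have hfd : HasFDerivAt (fun z => f (Function.update x ν z))
      ((fderiv ℝ f x).comp S) (x ν) := by
    have : (fun z => f (Function.update x ν z))
        = fun z => f ((x - Pi.single ν (x ν)) + S z) := by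
      funext z
      rw [update_eq_add_single' ν x z]
      congr 1
      rw [← blockSingle_apply ν (z - x ν), map_sub, blockSingle_apply, blockSingle_apply]
      abel
    rw [this]; exact hcomp
  have hg : HasGradientAt (fun z => f (Function.update x ν z))
      ((InnerProductSpace.toDual ℝ _).symm ((fderiv ℝ f x).comp S)) (x ν) :=
    (hasFDerivAt_iff_hasGradientAt).1 hfd
  have : pgrad ν f x = (InnerProductSpace.toDual ℝ _).symm ((fderiv ℝ f x).comp S) :=
    hg.gradient
  rw [this, InnerProductSpace.toDual_symm_apply]
  rfl

/-- Under MFCQ with respect to player `ν` at a point feasible for player `ν`,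
the feasible set `X_ν (y^{-ν})` is nonempty for all `y` in a neighbourhood of `x`. -/
theorem stmt6 {N : ℕ} {n : Fin N → ℕ} {r : ℕ}
    (ν : Fin N) (c : Fin r → Strat n → ℝ)
    (hc : ∀ i, ContDiff ℝ 1 (c i))
    (x : Strat n)
    (hfeas : ∀ i, c i x ≤ 0)
    (hMFCQ : ∃ d : EuclideanSpace ℝ (Fin (n ν)), ∀ i, c i x = 0 →
      inner (𝕜 := ℝ) (pgrad ν (c i) x) d < 0) :
    ∃ U ∈ 𝓝 x, ∀ y ∈ U, ∃ z : EuclideanSpace ℝ (Fin (n ν)),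
      ∀ i, c i (Function.update y ν z) ≤ 0 := by
  obtain ⟨d, hd⟩ := hMFCQ
  set v : Strat n := Pi.single ν d with hv
  -- the curve t ↦ x + t • v
  have hγ : HasDerivAt (fun t : ℝ => x + t • v) v 0 := by
    have : HasDerivAt (fun t : ℝ => t • v) v 0 := by
      simpa using (hasDerivAt_id (0 : ℝ)).smul_const v
    simpa using this.const_add x
  have hγ0 : x + (0 : ℝ) • v = x := by simp
  set φ : Fin r → ℝ → ℝ := fun i t => c i (x + t • v) with hφdef
  have hφ : ∀ i, HasDerivAt (φ i) (fderiv ℝ (c i) x v) 0 := by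
    intro i
    have h2 : HasFDerivAt (c i) (fderiv ℝ (c i) x) x :=
      ((hc i).differentiable one_ne_zero x).hasFDerivAt
    have h2' : HasFDerivAt (c i) (fderiv ℝ (c i) x) ((fun t : ℝ => x + t • v) 0) := by
      simpa using h2
    have := h2'.comp_hasDerivAt 0 hγ
    exact this
  have hφ0 : ∀ i, φ i 0 = c i x := by intro i; simp [hφdef]
  -- eventually negative along the curve
  have key : ∀ i, ∀ᶠ t in 𝓝[>] (0 : ℝ), φ i t < 0 := by
    intro i
    rcases lt_or_eq_of_le (hfeas i) with hlt | heq
    · have : Tendsto (φ i) (𝓝 0) (𝓝 (φ i 0)) := (hφ i).continuousAt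
      have h := this.eventually_lt_const (by rw [hφ0 i]; exact hlt)
      exact h.filter_mono nhdsWithin_le_nhds
    · have hneg : fderiv ℝ (c i) x v < 0 := by
        rw [hv, ← inner_pgrad_eq ν (c i) (hc i) x d]
        exact hd i heq
      have hslope : Tendsto (slope (φ i) 0) (𝓝[≠] 0) (𝓝 (fderiv ℝ (c i) x v)) :=
        hasDerivAt_iff_tendsto_slope.1 (hφ i)
      have hev : ∀ᶠ t in 𝓝[≠] (0 : ℝ), slope (φ i) 0 t < 0 :=
        hslope.eventually_lt_const hneg
      have hev' : ∀ᶠ t in 𝓝[>] (0 : ℝ), slope (φ i) 0 t < 0 :=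
        hev.filter_mono (nhdsWithin_mono 0 fun t ht => ne_of_gt ht)
      filter_upwards [hev', self_mem_nhdsWithin] with t hts htpos
      have ht0 : (0 : ℝ) < t := htpos
      have : (φ i t - φ i 0) / t < 0 := by
        simpa [slope_def_field] using hts
      have hnum : φ i t - φ i 0 < 0 := by
        by_contra hge
        push_neg at hge
        exact absurd (div_nonneg hge ht0.le) (not_le.mpr this)
      rw [hφ0 i, heq] at hnum
      linarith
  have hall : ∀ᶠ t in 𝓝[>] (0 : ℝ), ∀ i, φ i t < 0 := eventually_all.2 key
  obtain ⟨t, ht⟩ := hall.exists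
  -- now move the base point
  have hU : ∀ᶠ y in 𝓝 x, ∀ i, c i (y + t • v) < 0 := by
    refine eventually_all.2 fun i => ?_
    have hcont : Tendsto (fun y : Strat n => c i (y + t • v)) (𝓝 x) (𝓝 (c i (x + t • v))) :=
      ((hc i).continuous.comp (continuous_id.add continuous_const)).continuousAt
    exact hcont.eventually_lt_const (ht i)
  refine ⟨{y | ∀ i, c i (y + t • v) < 0}, hU, fun y hy => ⟨y ν + t • d, fun i => ?_⟩⟩
  have : Function.update y ν (y ν + t • d) = y + t • v := by
    rw [update_eq_add_single ν y (t • d), hv]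
    congr 1
    rw [← blockSingle_apply ν (t • d), map_smul, blockSingle_apply]
  rw [this]
  exact (hy i).le
end

section
/- Consider a GNEP with continuously differentiable constraint functions c^ν, let ν be a fixed player index, and let x ∈ ℝ^n be a point with c^ν(x) ≤ 0 at which c^ν satisfies MFCQ_ν. Then, for every ε > 0, there is a neighbourhood U of x such that for every y ∈ U there exists z^ν ∈ X_ν(y^{−ν}) with ‖z^ν − y^ν‖ ≤ ε. -/
open Filter Topology Finset Function RealInnerProductSpace

/-- Under MFCQ with respect to player `ν` at a point feasible for player `ν`,
for every `ε > 0` there is a neighbourhood `U` of `x` such that every `y ∈ U` admits a point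
of `X_ν (y^{-ν})` within distance `ε` of `y^ν`. -/
theorem stmt7 {N : ℕ} {n : Fin N → ℕ} {r : ℕ}
    (ν : Fin N) (c : Fin r → Strat n → ℝ)
    (hc : ∀ i, ContDiff ℝ 1 (c i))
    (x : Strat n)
    (hfeas : ∀ i, c i x ≤ 0)
    (hMFCQ : ∃ d : EuclideanSpace ℝ (Fin (n ν)), ∀ i, c i x = 0 →
      inner (𝕜 := ℝ) (pgrad ν (c i) x) d < 0) :
    ∀ ε > (0:ℝ), ∃ U ∈ 𝓝 x, ∀ y ∈ U, ∃ z : EuclideanSpace ℝ (Fin (n ν)),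
      (∀ i, c i (Function.update y ν z) ≤ 0) ∧ ‖z - y ν‖ ≤ ε := by
  obtain ⟨d, hd⟩ := hMFCQ
  intro ε hε
  set φ : Fin r → ℝ → ℝ := fun i t => c i (Function.update x ν (x ν + t • d)) with hφdef
  have hdiff : ∀ i, DifferentiableAt ℝ (fun z => c i (Function.update x ν z)) (x ν) := by
    intro i
    exact DifferentiableAt.comp (x ν)
      (((hc i).differentiable one_ne_zero).differentiableAt)
      ((hasFDerivAt_update x (x ν)).differentiableAt)
  have key : ∀ i, (inner (𝕜 := ℝ) (pgrad ν (c i) x) d : ℝ)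
      = fderiv ℝ (fun z => c i (Function.update x ν z)) (x ν) d := by
    intro i
    unfold pgrad gradient
    exact InnerProductSpace.toDual_symm_apply
  have hderiv : ∀ i, HasDerivAt (φ i) (inner (𝕜 := ℝ) (pgrad ν (c i) x) d) 0 := by
    intro i
    have h2 : HasDerivAt (fun t : ℝ => x ν + t • d) d 0 := by
      simpa using ((hasDerivAt_id (0:ℝ)).smul_const d).const_add (x ν)
    have h1 : HasFDerivAt (fun z => c i (Function.update x ν z))
        (fderiv ℝ (fun z => c i (Function.update x ν z)) (x ν))
        ((fun t : ℝ => x ν + t • d) 0) := by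
      simpa using (hdiff i).hasFDerivAt
    rw [key i]
    exact h1.comp_hasDerivAt 0 h2
  have hφ0 : ∀ i, φ i 0 = c i x := by
    intro i
    simp [hφdef, Function.update_eq_self]
  have hsmall : ∀ i, ∀ᶠ t in 𝓝[>] (0:ℝ), φ i t < 0 := by
    intro i
    rcases lt_or_eq_of_le (hfeas i) with h | h
    · have hcont : ContinuousAt (φ i) 0 := (hderiv i).continuousAt
      have h0 : φ i 0 < 0 := by rw [hφ0 i]; exact h
      exact (hcont.eventually_lt_const h0).filter_mono nhdsWithin_le_nhds
    · have hL : (inner (𝕜 := ℝ) (pgrad ν (c i) x) d : ℝ) < 0 := hd i h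
      have hslope : Tendsto (slope (φ i) 0) (𝓝[≠] (0:ℝ))
          (𝓝 (inner (𝕜 := ℝ) (pgrad ν (c i) x) d)) :=
        hasDerivAt_iff_tendsto_slope.mp (hderiv i)
      have hev := hslope.eventually_lt_const hL
      have hmono : 𝓝[>] (0:ℝ) ≤ 𝓝[≠] (0:ℝ) :=
        nhdsWithin_mono 0 (fun t ht => ne_of_gt ht)
      filter_upwards [hev.filter_mono hmono, self_mem_nhdsWithin] with t hst ht
      rw [slope_def_field] at hst
      have hφi0 : φ i 0 = 0 := by rw [hφ0 i, h]
      rw [hφi0, sub_zero, sub_zero] at hst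
      rw [div_neg_iff] at hst
      rcases hst with ⟨_, h2⟩ | ⟨h1, _⟩
      · exact absurd ht (not_lt.mpr h2.le)
      · exact h1
  have hnorm : ∀ᶠ t in 𝓝[>] (0:ℝ), t * ‖d‖ ≤ ε := by
    have ht : Tendsto (fun t : ℝ => t * ‖d‖) (𝓝[>] (0:ℝ)) (𝓝 (0 * ‖d‖)) :=
      (tendsto_id.mono_left nhdsWithin_le_nhds).mul_const _
    rw [zero_mul] at ht
    exact ht.eventually_le_const hε
  obtain ⟨t, ⟨htsmall, htnorm⟩, htpos⟩ :=
    (((eventually_all.2 hsmall).and hnorm).and self_mem_nhdsWithin).exists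
  have hcontg : ∀ i, ContinuousAt
      (fun y : Strat n => c i (Function.update y ν (y ν + t • d))) x :=
    fun i => ((hc i).continuous.comp
      (continuous_id.update ν ((continuous_apply ν).add continuous_const))).continuousAt
  have hU : ∀ᶠ y in 𝓝 x, ∀ i, c i (Function.update y ν (y ν + t • d)) < 0 :=
    eventually_all.2 fun i => (hcontg i).eventually_lt_const (htsmall i)
  refine ⟨{y | ∀ i, c i (Function.update y ν (y ν + t • d)) < 0}, hU, ?_⟩
  intro y hy
  refine ⟨y ν + t • d, fun i => (hy i).le, ?_⟩
  rw [add_sub_cancel_left, norm_smul, Real.norm_eq_abs, abs_of_pos htpos]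
  exact htnorm
end

section
/- Consider a GNEP with continuously differentiable constraint functions, let ν be a fixed player index, and let x ∈ ℝ^n satisfy c^ν(x) ≤ 0. Assume that c^ν satisfies MFCQ_ν at x and that the partial Jacobian ∇_{x^ν}c^ν is Lipschitz continuous in a neighbourhood of x. Then there exist a constant C > 0 and a neighbourhood U of x such that for every y ∈ U the error bound dist(y^ν, X_ν(y^{−ν})) ≤ C ‖c_+^ν(y)‖ holds. -/
open Filter Topology Finset Function RealInnerProductSpace

section Aux

variable {N : ℕ} {n : Fin N → ℕ}

noncomputable def ins (ν : Fin N) : EuclideanSpace ℝ (Fin (n ν)) →L[ℝ] Strat n :=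
  ContinuousLinearMap.pi (Pi.single ν (ContinuousLinearMap.id ℝ _))

lemma pgrad_inner {ν : Fin N} (f : Strat n → ℝ) (hf : Differentiable ℝ f)
    (p : Strat n) (v : EuclideanSpace ℝ (Fin (n ν))) :
    inner (𝕜 := ℝ) (pgrad ν f p) v = fderiv ℝ f p (ins ν v) := by
  have hA : HasFDerivAt (Function.update p ν) (ins ν) (p ν) := hasFDerivAt_update p (p ν)
  have hcomp : HasFDerivAt (fun z => f (Function.update p ν z))
      ((fderiv ℝ f p).comp (ins ν)) (p ν) := by
    have := ((hf (Function.update p ν (p ν))).hasFDerivAt).comp (p ν) hA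
    rw [Function.update_eq_self] at this
    exact this
  have hgrad := hasFDerivAt_iff_hasGradientAt.mp hcomp
  have : pgrad ν f p = (InnerProductSpace.toDual ℝ _).symm ((fderiv ℝ f p).comp (ins ν)) :=
    hgrad.gradient
  rw [pgrad] at this
  rw [pgrad, this, InnerProductSpace.toDual_symm_apply]
  rfl

lemma key_deriv {ν : Fin N} (f : Strat n → ℝ) (hf : Differentiable ℝ f)
    (y : Strat n) (w v : EuclideanSpace ℝ (Fin (n ν))) (t : ℝ) :
    HasDerivAt (fun s : ℝ => f (Function.update y ν (w + s • v)))
      (inner (𝕜 := ℝ) (pgrad ν f (Function.update y ν (w + t • v))) v) t := by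
  set p := Function.update y ν (w + t • v) with hp
  have hγ : HasDerivAt (fun s : ℝ => w + s • v) v t := by
    simpa using (hasDerivAt_id t).smul_const v |>.const_add w
  have hA : HasFDerivAt (Function.update y ν) (ins ν) (w + t • v) :=
    hasFDerivAt_update y _
  have h1 : HasDerivAt (fun s : ℝ => Function.update y ν (w + s • v)) (ins ν v) t :=
    by have := hA.comp_hasDerivAt t hγ; exact this
  have h2 : HasDerivAt (fun s : ℝ => f (Function.update y ν (w + s • v)))
      (fderiv ℝ f p (ins ν v)) t := (hf p).hasFDerivAt.comp_hasDerivAt t h1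
  rw [pgrad_inner f hf p v]
  exact h2

lemma dist_update_le (ν : Fin N) (y : Strat n) (a : EuclideanSpace ℝ (Fin (n ν))) :
    dist (Function.update y ν a) y ≤ dist a (y ν) := by
  rw [dist_pi_le_iff dist_nonneg]
  intro μ
  by_cases h : μ = ν
  · subst h; simp
  · simp [Function.update_of_ne h, dist_nonneg]

end Aux

set_option maxHeartbeats 1000000 in
/-- Under MFCQ with respect to player `ν` and local Lipschitz continuity of
the partial Jacobian, a local error bound on the distance to `X_ν (y^{-ν})` holds. -/
theorem stmt8 {N : ℕ} {n : Fin N → ℕ} {r : ℕ}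
    (ν : Fin N) (c : Fin r → Strat n → ℝ)
    (hc : ∀ i, ContDiff ℝ 1 (c i))
    (x : Strat n)
    (hfeas : ∀ i, c i x ≤ 0)
    (hMFCQ : ∃ d : EuclideanSpace ℝ (Fin (n ν)), ∀ i, c i x = 0 →
      inner (𝕜 := ℝ) (pgrad ν (c i) x) d < 0)
    (hLip : ∃ L : ℝ, ∃ V ∈ 𝓝 x, ∀ y ∈ V, ∀ z ∈ V, ∀ i,
      ‖pgrad ν (c i) y - pgrad ν (c i) z‖ ≤ L * dist y z) :
    ∃ C > (0:ℝ), ∃ U ∈ 𝓝 x, ∀ y ∈ U,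
      Metric.infDist (y ν) {w : EuclideanSpace ℝ (Fin (n ν)) |
          ∀ i, c i (Function.update y ν w) ≤ 0} ≤
        C * Real.sqrt (∑ i, max (c i y) 0 ^ 2) := by
  obtain ⟨d, hd⟩ := hMFCQ
  obtain ⟨L₀, V, hV, hLipV⟩ := hLip
  have hcd : ∀ i, Differentiable ℝ (c i) := fun i => (hc i).differentiable one_ne_zero
  set g : Fin r → Strat n → EuclideanSpace ℝ (Fin (n ν)) := fun i y => pgrad ν (c i) y with hg
  set L : ℝ := max L₀ 0 with hL
  have hL0 : 0 ≤ L := le_max_right _ _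
  set S : Strat n → ℝ := fun y => Real.sqrt (∑ i, max (c i y) 0 ^ 2) with hS
  have hSnonneg : ∀ y, 0 ≤ S y := fun y => Real.sqrt_nonneg _
  have hSle : ∀ y i, c i y ≤ S y := by
    intro y i
    have h1 : c i y ≤ max (c i y) 0 := le_max_left _ _
    have h2 : max (c i y) 0 ≤ Real.sqrt (∑ j, max (c j y) 0 ^ 2) :=
      (Real.le_sqrt (le_max_right _ _) (Finset.sum_nonneg fun j _ => sq_nonneg _)).mpr
        (Finset.single_le_sum (f := fun j => max (c j y) 0 ^ 2)
          (fun j _ => sq_nonneg _) (Finset.mem_univ i))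
    exact h1.trans h2
  have hScont : Continuous S := by
    apply Real.continuous_sqrt.comp
    exact continuous_finset_sum _ fun i _ => ((hc i).continuous.max continuous_const).pow 2
  have hSx : S x = 0 := by
    rw [hS]
    have : ∀ i ∈ Finset.univ, max (c i x) 0 ^ 2 = 0 := by
      intro i _
      rw [max_eq_right (hfeas i)]; ring
    simp [Finset.sum_congr rfl this]
  -- the constant η
  obtain ⟨η, hη0, hη⟩ : ∃ η > (0:ℝ), ∀ i, min (inner (𝕜 := ℝ) (g i x) d) (c i x) ≤ -η := by
    have hm : ∀ i, min (inner (𝕜 := ℝ) (g i x) d) (c i x) < 0 := by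
      intro i
      rcases (hfeas i).lt_or_eq with h | h
      · exact min_lt_of_right_lt h
      · exact min_lt_of_left_lt (hd i h)
    rcases Nat.eq_zero_or_pos r with h0 | h0
    · exact ⟨1, one_pos, fun i => absurd i.isLt (by omega)⟩
    · obtain ⟨b, -, hb⟩ := Finset.exists_max_image Finset.univ
        (fun i => min (inner (𝕜 := ℝ) (g i x) d) (c i x)) ⟨⟨0, h0⟩, Finset.mem_univ _⟩
      refine ⟨-(min (inner (𝕜 := ℝ) (g b x) d) (c b x)), by linarith [hm b], fun i => ?_⟩
      have := hb i (Finset.mem_univ i)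
      simpa using this
  -- bound M on |inner (g i x) d|
  obtain ⟨M, hM0, hM⟩ : ∃ M ≥ (0:ℝ), ∀ i, |inner (𝕜 := ℝ) (g i x) d| ≤ M := by
    rcases Nat.eq_zero_or_pos r with h0 | h0
    · exact ⟨0, le_refl _, fun i => absurd i.isLt (by omega)⟩
    · obtain ⟨b, -, hb⟩ := Finset.exists_max_image Finset.univ
        (fun i => |inner (𝕜 := ℝ) (g i x) d|) ⟨⟨0, h0⟩, Finset.mem_univ _⟩
      exact ⟨|inner (𝕜 := ℝ) (g b x) d|, abs_nonneg _, fun i => by simpa using hb i (Finset.mem_univ i)⟩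
  set M' : ℝ := M + η/2 with hM'
  -- radius ρ
  obtain ⟨ρ, hρ0, hρV, hρη⟩ : ∃ ρ > (0:ℝ), Metric.closedBall x ρ ⊆ V ∧ L * ρ * ‖d‖ ≤ η/2 := by
    obtain ⟨ε, hε0, hεV⟩ := Metric.mem_nhds_iff.mp hV
    have ha : (0:ℝ) ≤ L * ‖d‖ := mul_nonneg hL0 (norm_nonneg d)
    refine ⟨min (ε/2) (η/(2*(L*‖d‖+1))), by positivity, ?_, ?_⟩
    · refine (Metric.closedBall_subset_ball ?_).trans hεV
      calc min (ε/2) (η/(2*(L*‖d‖+1))) ≤ ε/2 := min_le_left _ _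
        _ < ε := by linarith
    · calc L * min (ε/2) (η/(2*(L*‖d‖+1))) * ‖d‖
          = min (ε/2) (η/(2*(L*‖d‖+1))) * (L * ‖d‖) := by ring
        _ ≤ (η/(2*(L*‖d‖+1))) * (L * ‖d‖) :=
            mul_le_mul_of_nonneg_right (min_le_right _ _) ha
        _ ≤ η/2 := by
            rw [div_mul_eq_mul_div, div_le_div_iff₀ (by positivity) (by positivity)]
            nlinarith
  -- key gradient estimate on the ball
  have hgrad_est : ∀ p ∈ Metric.closedBall x ρ, ∀ i,
      |inner (𝕜 := ℝ) (g i p) d - inner (𝕜 := ℝ) (g i x) d| ≤ η/2 := by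
    intro p hp i
    have hxB : x ∈ Metric.closedBall x ρ := Metric.mem_closedBall_self hρ0.le
    have h1 : ‖g i p - g i x‖ ≤ L₀ * dist p x := hLipV p (hρV hp) x (hρV hxB) i
    have h2 : L₀ * dist p x ≤ L * ρ :=
      mul_le_mul (le_max_left _ _) (Metric.mem_closedBall.mp hp) dist_nonneg hL0
    calc |inner (𝕜 := ℝ) (g i p) d - inner (𝕜 := ℝ) (g i x) d|
        = |inner (𝕜 := ℝ) (g i p - g i x) d| := by rw [inner_sub_left]
      _ ≤ ‖g i p - g i x‖ * ‖d‖ := abs_real_inner_le_norm _ _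
      _ ≤ (L * ρ) * ‖d‖ := mul_le_mul_of_nonneg_right (h1.trans h2) (norm_nonneg d)
      _ ≤ η/2 := hρη
  -- choose σ
  set σ : ℝ := min (ρ*η/(4*(‖d‖+1))) (η*η/(8*(M'+1))) with hσ
  have hσ0 : 0 < σ := by
    have h1 : (0:ℝ) < ρ*η/(4*(‖d‖+1)) := by positivity
    have h2 : (0:ℝ) < η*η/(8*(M'+1)) := by
      apply div_pos (by positivity)
      rw [hM']
      nlinarith
    exact lt_min h1 h2
  -- the neighbourhood
  have hU : ∀ᶠ y in 𝓝 x, dist y x < ρ/2 ∧ (∀ i, c i y < c i x + η/4) ∧ S y < σ := by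
    have e1 : ∀ᶠ y in 𝓝 x, dist y x < ρ/2 := by
      have := Metric.ball_mem_nhds x (show (0:ℝ) < ρ/2 by positivity)
      exact this
    have e2 : ∀ᶠ y in 𝓝 x, ∀ i, c i y < c i x + η/4 := by
      rw [Filter.eventually_all]
      intro i
      exact Filter.Tendsto.eventually_lt_const (by linarith) (hc i).continuous.continuousAt
    have e3 : ∀ᶠ y in 𝓝 x, S y < σ :=
      Filter.Tendsto.eventually_lt_const (hSx ▸ hσ0) hScont.continuousAt
    filter_upwards [e1, e2, e3] with y h1 h2 h3
    exact ⟨h1, h2, h3⟩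
  refine ⟨2*(‖d‖+1)/η, by positivity, _, hU, ?_⟩
  rintro y ⟨hy1, hy2, hy3⟩
  set t : ℝ := 2 * S y / η with ht
  have ht0 : 0 ≤ t := by positivity
  set w : EuclideanSpace ℝ (Fin (n ν)) := y ν + t • d with hw
  -- points on the segment are in the ball
  have htd : t * ‖d‖ ≤ ρ/2 := by
    have hσ1 : S y ≤ ρ*η/(4*(‖d‖+1)) := le_of_lt (hy3.trans_le (min_le_left _ _))
    have hS4 : S y * (4*(‖d‖+1)) ≤ ρ*η := (le_div_iff₀ (by positivity)).mp hσ1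
    rw [ht, div_mul_eq_mul_div, div_le_div_iff₀ hη0 two_pos]
    nlinarith [norm_nonneg d, hSnonneg y]
  have hseg : ∀ s ∈ Set.Icc 0 t, Function.update y ν (y ν + s • d) ∈ Metric.closedBall x ρ := by
    intro s hs
    have h1 : dist (Function.update y ν (y ν + s • d)) y ≤ s * ‖d‖ := by
      refine (dist_update_le ν y _).trans ?_
      rw [dist_eq_norm]
      simp [norm_smul, abs_of_nonneg hs.1]
    have h2 : s * ‖d‖ ≤ t * ‖d‖ := mul_le_mul_of_nonneg_right hs.2 (norm_nonneg d)
    rw [Metric.mem_closedBall]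
    calc dist (Function.update y ν (y ν + s • d)) x
        ≤ dist (Function.update y ν (y ν + s • d)) y + dist y x := dist_triangle _ _ _
      _ ≤ s * ‖d‖ + ρ/2 := add_le_add h1 hy1.le
      _ ≤ ρ/2 + ρ/2 := by linarith
      _ = ρ := by ring
  -- feasibility of w
  have hwK : ∀ i, c i (Function.update y ν w) ≤ 0 := by
    intro i
    set φ : ℝ → ℝ := fun s => c i (Function.update y ν (y ν + s • d)) with hφdef
    have hφ : ∀ s : ℝ, HasDerivAt φ
        (inner (𝕜 := ℝ) (g i (Function.update y ν (y ν + s • d))) d) s :=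
      fun s => key_deriv (c i) (hcd i) y (y ν) d s
    have hφ0 : φ 0 = c i y := by simp [hφdef]
    have hφt : c i (Function.update y ν w) = φ t := rfl
    have hgoal : ∀ u : ℝ, φ t ≤ u → u ≤ 0 → c i (Function.update y ν w) ≤ 0 := by
      intro u h1 h2; rw [hφt]; linarith
    rcases min_le_iff.mp (hη i) with hA | hB
    · -- active-type constraint: derivative ≤ -η/2 on the segment
      have hder : ∀ s ∈ Set.Icc (0:ℝ) t,
          inner (𝕜 := ℝ) (g i (Function.update y ν (y ν + s • d))) d ≤ -(η/2) := by
        intro s hs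
        have h := (abs_le.mp (hgrad_est _ (hseg s hs) i)).2
        linarith
      set ψ : ℝ → ℝ := fun s => φ s + (η/2)*s with hψdef
      have hψd : ∀ s : ℝ, HasDerivAt ψ
          (inner (𝕜 := ℝ) (g i (Function.update y ν (y ν + s • d))) d + η/2) s := by
        intro s
        have h2 : HasDerivAt (fun u : ℝ => (η/2)*u) (η/2) s := by
          simpa using (hasDerivAt_id s).const_mul (η/2)
        exact (hφ s).add h2
      have hanti : AntitoneOn ψ (Set.Icc 0 t) := by
        apply antitoneOn_of_deriv_nonpos (convex_Icc 0 t)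
        · exact (continuous_iff_continuousAt.mpr
            fun s => (hψd s).differentiableAt.continuousAt).continuousOn
        · intro s _
          exact (hψd (s : ℝ)).differentiableAt.differentiableWithinAt
        · intro s hs
          rw [interior_Icc] at hs
          rw [(hψd s).deriv]
          have := hder s (Set.mem_Icc_of_Ioo hs)
          linarith
      have hψle : ψ t ≤ ψ 0 :=
        hanti (Set.left_mem_Icc.mpr ht0) (Set.right_mem_Icc.mpr ht0) ht0
      have hts : (η/2)*t = S y := by
        rw [ht]; field_simp
      have h1 : φ t ≤ c i y - S y := by
        have h2 : φ t + (η/2)*t ≤ φ 0 + (η/2)*0 := hψle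
        rw [hts] at h2
        simp only [mul_zero, add_zero] at h2
        linarith [hφ0 ▸ h2]
      exact hgoal _ h1 (by linarith [hSle y i])
    · -- inactive-type constraint
      have hM'0 : 0 ≤ M' := by rw [hM']; linarith
      have bound : ∀ s ∈ Set.Ico (0:ℝ) t,
          ‖inner (𝕜 := ℝ) (g i (Function.update y ν (y ν + s • d))) d‖ ≤ M' := by
        intro s hs
        have h := (hgrad_est _ (hseg s (Set.mem_Icc_of_Ico hs)) i)
        rw [Real.norm_eq_abs, hM']
        have habs := abs_sub_abs_le_abs_sub
          (inner (𝕜 := ℝ) (g i (Function.update y ν (y ν + s • d))) d)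
          (inner (𝕜 := ℝ) (g i x) d)
        linarith [hM i]
      have hMVT := norm_image_sub_le_of_norm_deriv_le_segment'
        (f := φ)
        (f' := fun s => inner (𝕜 := ℝ) (g i (Function.update y ν (y ν + s • d))) d)
        (fun s hs => (hφ s).hasDerivWithinAt) bound t (Set.right_mem_Icc.mpr ht0)
      have htle : M' * t ≤ η/4 := by
        have hσ2 : S y ≤ η*η/(8*(M'+1)) := le_of_lt (hy3.trans_le (min_le_right _ _))
        have h8 : S y * (8*(M'+1)) ≤ η*η := (le_div_iff₀ (by positivity)).mp hσ2
        rw [ht, ← mul_div_assoc, div_le_div_iff₀ hη0 (by norm_num : (0:ℝ) < 4)]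
        nlinarith [hSnonneg y]
      have h1 : φ t - φ 0 ≤ M' * t := by
        rw [Real.norm_eq_abs] at hMVT
        have := (abs_le.mp (by simpa using hMVT)).2
        linarith
      have h3 : c i y < c i x + η/4 := hy2 i
      have h4 : φ t ≤ c i y + η/4 := by
        have h6 : φ t - φ 0 ≤ η/4 := h1.trans htle
        have h5 : φ t ≤ φ 0 + η/4 := by linarith only [h6]
        rw [hφ0] at h5
        exact h5
      exact hgoal (c i y + η/4) h4 (by linarith)
  calc Metric.infDist (y ν) {w | ∀ i, c i (Function.update y ν w) ≤ 0}
      ≤ dist (y ν) w := Metric.infDist_le_dist_of_mem hwK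
    _ ≤ 2*(‖d‖+1)/η * S y := by
        have hde : dist (y ν) w = t * ‖d‖ := by
          rw [hw, dist_eq_norm]
          simp [norm_smul, abs_of_nonneg ht0]
        rw [hde, ht]
        calc 2 * S y / η * ‖d‖ = 2*(S y * ‖d‖)/η := by ring
          _ ≤ 2*(S y * (‖d‖+1))/η := by
              gcongr 2*(S y * ?_)/η
              linarith [norm_nonneg d]
          _ = 2*(‖d‖+1)/η * S y := by ring
end

section
/- Let x̄ be a KKT point of the Feasibility GNEP associated with a partially penalized GNEP with continuously differentiable g^ν and h^ν, and assume that GNEP-EMFCQ holds at x̄ for the combined constraints c^ν = (g^ν, h^ν). Then g^ν(x̄) ≤ 0 for every ν, i.e. x̄ is feasible for the original GNEP; in particular, x̄ is a global solution of the Feasibility GNEP. -/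
open Filter Topology Finset Function RealInnerProductSpace

lemma hasDerivAt_maxSq (t : ℝ) :
    HasDerivAt (fun s : ℝ => max s 0 ^ 2) (2 * max t 0) t := by
  rcases lt_trichotomy t 0 with ht | rfl | ht
  · have he : (fun s : ℝ => max s 0 ^ 2) =ᶠ[𝓝 t] fun _ => (0 : ℝ) := by
      filter_upwards [Iio_mem_nhds ht] with s hs
      simp [max_eq_right (le_of_lt (Set.mem_Iio.mp hs))]
    have h0 : HasDerivAt (fun _ : ℝ => (0 : ℝ)) 0 t := hasDerivAt_const t 0
    have := h0.congr_of_eventuallyEq he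
    simpa [max_eq_right ht.le] using this
  · rw [hasDerivAt_iff_isLittleO]
    simp only [max_self, mul_zero, sub_zero, smul_eq_mul, zero_mul, zero_pow, ne_eq,
      OfNat.ofNat_ne_zero, not_false_eq_true]
    rw [Asymptotics.isLittleO_iff]
    intro c hc
    filter_upwards [Metric.ball_mem_nhds (0:ℝ) hc] with s hs
    rw [Metric.mem_ball, Real.dist_eq, sub_zero] at hs
    simp only [Real.norm_eq_abs]
    have h1 : max s 0 ≤ |s| := max_le (le_abs_self s) (abs_nonneg s)
    have h0 : 0 ≤ max s 0 := le_max_right _ _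
    calc |max s 0 ^ 2| = max s 0 * max s 0 := by rw [sq, abs_of_nonneg (by positivity)]
      _ ≤ |s| * |s| := mul_le_mul h1 h1 h0 (abs_nonneg s)
      _ ≤ c * |s| := mul_le_mul_of_nonneg_right hs.le (abs_nonneg s)
  · have he : (fun s : ℝ => max s 0 ^ 2) =ᶠ[𝓝 t] fun s => s ^ 2 := by
      filter_upwards [Ioi_mem_nhds ht] with s hs
      simp [max_eq_left (le_of_lt (Set.mem_Ioi.mp hs))]
    have h2 : HasDerivAt (fun s : ℝ => s ^ 2) (2 * t) t := by
      simpa using (hasDerivAt_pow 2 t)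
    have := h2.congr_of_eventuallyEq he
    simpa [max_eq_left ht.le] using this

lemma hasGradientAt_comp_real {E : Type*} [NormedAddCommGroup E] [InnerProductSpace ℝ E]
    [CompleteSpace E] {f : E → ℝ} {x G : E} (hf : HasGradientAt f G x)
    {φ : ℝ → ℝ} {φ' : ℝ} (hφ : HasDerivAt φ φ' (f x)) :
    HasGradientAt (fun z => φ (f z)) (φ' • G) x := by
  rw [hasGradientAt_iff_hasFDerivAt] at hf ⊢
  have := hφ.comp_hasFDerivAt x hf
  exact this.congr_fderiv (by simp [map_smul])

lemma hasGradientAt_sum' {E : Type*} [NormedAddCommGroup E] [InnerProductSpace ℝ E]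
    [CompleteSpace E] {ι : Type*} (s : Finset ι) {f : ι → E → ℝ} {x : E} {G : ι → E}
    (hf : ∀ i ∈ s, HasGradientAt (f i) (G i) x) :
    HasGradientAt (fun z => ∑ i ∈ s, f i z) (∑ i ∈ s, G i) x := by
  rw [hasGradientAt_iff_hasFDerivAt]
  have := HasFDerivAt.fun_sum (fun i hi => (hasGradientAt_iff_hasFDerivAt.mp (hf i hi)))
  exact this.congr_fderiv (by simp [map_sum])

lemma pgrad_penalty {N : ℕ} {n : Fin N → ℕ} {M : ℕ} (ν : Fin N)
    (g : Fin M → Strat n → ℝ) (hg : ∀ i, ContDiff ℝ 1 (g i)) (xbar : Strat n) :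
    pgrad ν (fun y => ∑ i, max (g i y) 0 ^ 2) xbar
      = ∑ i, (2 * max (g i xbar) 0) • pgrad ν (g i) xbar := by
  have hdiff : ∀ i, DifferentiableAt ℝ (fun z => g i (Function.update xbar ν z)) (xbar ν) :=
    fun i => (((hg i).comp (contDiff_update 1 xbar ν)).differentiable one_ne_zero).differentiableAt
  have hGi : ∀ i, HasGradientAt (fun z => g i (Function.update xbar ν z))
      (pgrad ν (g i) xbar) (xbar ν) := fun i => (hdiff i).hasGradientAt
  have key : HasGradientAt (fun z => ∑ i, max (g i (Function.update xbar ν z)) 0 ^ 2)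
      (∑ i, (2 * max (g i xbar) 0) • pgrad ν (g i) xbar) (xbar ν) := by
    apply hasGradientAt_sum'
    intro i _
    have := hasGradientAt_comp_real (hGi i)
      (hasDerivAt_maxSq (g i (Function.update xbar ν (xbar ν))))
    simpa [Function.update_eq_self] using this
  exact key.gradient

/-- **Theorem 4.3.** A KKT point of the Feasibility GNEP at which GNEP-EMFCQ
holds for the combined constraints is feasible for the original GNEP; in particular it is a
global solution of the Feasibility GNEP. -/
theorem stmt11 {N : ℕ} {n m p : Fin N → ℕ}
    (g : (ν : Fin N) → Fin (m ν) → Strat n → ℝ)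
    (h : (ν : Fin N) → Fin (p ν) → Strat n → ℝ)
    (hg : ∀ ν i, ContDiff ℝ 1 (g ν i))
    (hh : ∀ ν j, ContDiff ℝ 1 (h ν j))
    (xbar : Strat n)
    (hKKT : ∀ ν, ∃ w : Fin (p ν) → ℝ,
      (pgrad ν (fun y => ∑ i, max (g ν i y) 0 ^ 2) xbar
        + ∑ j, w j • pgrad ν (h ν j) xbar = 0) ∧
      (∀ j, min (-(h ν j xbar)) (w j) = 0))
    (hEMFCQ : ∀ ν, EMFCQnu ν (Sum.elim (g ν) (h ν)) xbar) :
    (∀ ν i, g ν i xbar ≤ 0) ∧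
    ((∀ ν j, h ν j xbar ≤ 0) ∧
      ∀ (ν : Fin N) (z : EuclideanSpace ℝ (Fin (n ν))),
        (∀ j, h ν j (Function.update xbar ν z) ≤ 0) →
        ∑ i, max (g ν i xbar) 0 ^ 2 ≤ ∑ i, max (g ν i (Function.update xbar ν z)) 0 ^ 2) := by
  
  have hgle : ∀ ν i, g ν i xbar ≤ 0 := by
    intro ν
    obtain ⟨w, heq, hcomp⟩ := hKKT ν
    obtain ⟨d, hd⟩ := hEMFCQ ν
    have hw : ∀ j, 0 ≤ w j := fun j => (hcomp j) ▸ min_le_right _ _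
    have hhle : ∀ j, h ν j xbar ≤ 0 := fun j => by
      have := (hcomp j) ▸ min_le_left (-(h ν j xbar)) (w j)
      linarith
    have hwh : ∀ j, 0 < w j → h ν j xbar = 0 := by
      intro j hj
      by_contra hne
      have hlt : h ν j xbar < 0 := lt_of_le_of_ne (hhle j) hne
      have : 0 < min (-(h ν j xbar)) (w j) := lt_min (by linarith) hj
      rw [hcomp j] at this
      exact lt_irrefl 0 this
    have hGd : ∀ i, 0 ≤ g ν i xbar →
        inner (𝕜 := ℝ) (pgrad ν (g ν i) xbar) d < 0 := fun i hi => hd (Sum.inl i) hi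
    have hHd : ∀ j, 0 ≤ h ν j xbar →
        inner (𝕜 := ℝ) (pgrad ν (h ν j) xbar) d < 0 := fun j hj => hd (Sum.inr j) hj
    rw [pgrad_penalty ν (g ν) (hg ν) xbar] at heq
    have hzero : ∑ i, (2 * max (g ν i xbar) 0) * inner (𝕜 := ℝ) (pgrad ν (g ν i) xbar) d
        + ∑ j, w j * inner (𝕜 := ℝ) (pgrad ν (h ν j) xbar) d = 0 := by
      have := congrArg (fun v => inner (𝕜 := ℝ) v d) heq
      simpa only [inner_add_left, sum_inner, real_inner_smul_left, inner_zero_left] using this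
    have hterm_le : ∀ i, (2 * max (g ν i xbar) 0) *
        inner (𝕜 := ℝ) (pgrad ν (g ν i) xbar) d ≤ 0 := by
      intro i
      rcases le_or_gt (g ν i xbar) 0 with hle | hlt
      · simp [max_eq_right hle]
      · exact mul_nonpos_of_nonneg_of_nonpos (by positivity) (hGd i hlt.le).le
    have h2 : ∑ j, w j * inner (𝕜 := ℝ) (pgrad ν (h ν j) xbar) d ≤ 0 := by
      apply Finset.sum_nonpos
      intro j _
      rcases eq_or_lt_of_le (hw j) with hj | hj
      · simp [← hj]
      · exact mul_nonpos_of_nonneg_of_nonpos (hw j)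
          (hHd j (le_of_eq (hwh j hj).symm)).le
    intro i
    by_contra hgt
    push_neg at hgt
    have hterm_i : (2 * max (g ν i xbar) 0) *
        inner (𝕜 := ℝ) (pgrad ν (g ν i) xbar) d < 0 :=
      mul_neg_of_pos_of_neg (by positivity) (hGd i hgt.le)
    have h1 : ∑ i, (2 * max (g ν i xbar) 0) *
        inner (𝕜 := ℝ) (pgrad ν (g ν i) xbar) d < 0 := by
      have := Finset.sum_lt_sum (fun i2 _ => hterm_le i2) ⟨i, Finset.mem_univ i, hterm_i⟩
      simpa using this
    linarith
  have hhle : ∀ ν j, h ν j xbar ≤ 0 := by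
    intro ν j
    obtain ⟨w, _, hcomp⟩ := hKKT ν
    have := (hcomp j) ▸ min_le_left (-(h ν j xbar)) (w j)
    linarith
  refine ⟨hgle, hhle, ?_⟩
  intro ν z _
  have hL : ∑ i, max (g ν i xbar) 0 ^ 2 = 0 := by
    apply Finset.sum_eq_zero
    intro i _
    simp [max_eq_right (hgle ν i)]
  rw [hL]
  positivity
end
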